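/- arXiv:2003.06759 — 11 statements merged into one kernel-verified Lean document; each statement's English description precedes it below -/
import Mathlib

section
/- For every vertex v of the associated directed graph Γ̃, the number of vertices w with a normal-arrow v ⟶ w equals the number of vertices u with a dashed-arrow v ⇢ u. -/
/-- Property (*): a bijection `f` between the vertex sets together with, for every vertex `v`,
a fixed isomorphism `φ v` from `Γ − v` onto `Γ' − f v` (encoded as an adjacency-preserving
bijection between the vertex sets with `v`, resp. `f v`, removed). -/
structure RCSetup {V V' : Type*} (G : SimpleGraph V) (G' : SimpleGraph V') where
  f : V ≃ V'
  φ : ∀ v : V, {w : V // w ≠ v} ≃ {w' : V' // w' ≠ f v}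
  adj_iff : ∀ (v : V) (x y : {w : V // w ≠ v}),
    G.Adj x.1 y.1 ↔ G'.Adj (φ v x).1 (φ v y).1

variable {V V' : Type*} {G : SimpleGraph V} {G' : SimpleGraph V'}

/-- There is a normal-arrow `v₁ ⟶ v₂` in the associated directed graph. -/
def RCSetup.Normal (H : RCSetup G G') (v₁ v₂ : V) : Prop :=
  ∃ h : v₂ ≠ v₁, ¬ G.Adj v₁ v₂ ∧ G'.Adj (H.f v₁) (H.φ v₁ ⟨v₂, h⟩).1

/-- There is a dashed-arrow `v₁ ⇢ v₂` in the associated directed graph. -/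
def RCSetup.Dashed (H : RCSetup G G') (v₁ v₂ : V) : Prop :=
  ∃ h : H.f v₂ ≠ H.f v₁, ¬ G'.Adj (H.f v₁) (H.f v₂) ∧ G.Adj v₁ ((H.φ v₁).symm ⟨H.f v₂, h⟩).1

/-- Ordered adjacent pairs correspond to a sigma type. -/
def RC.pairSigma {α : Type*} (R : α → α → Prop) :
    {p : α × α // R p.1 p.2} ≃ Σ x : α, {y // R x y} where
  toFun p := ⟨p.1.1, p.1.2, p.2⟩
  invFun s := ⟨(s.1, s.2.1), s.2.2⟩
  left_inv p := rfl
  right_inv s := rfl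

/-- Counting ordered adjacent pairs in `G − v`. -/
lemma RC.aux_pairs [Fintype V] (G : SimpleGraph V) (v : V) :
    Nat.card {p : {w : V // w ≠ v} × {w : V // w ≠ v} // G.Adj p.1.1 p.2.1}
      + 2 * Nat.card {w // G.Adj v w} = ∑ x : V, Nat.card {w // G.Adj x w} := by
  classical
  set N : V → Finset V := fun x => Finset.univ.filter (fun y => G.Adj x y) with hN
  have hcard : ∀ x : V, Nat.card {w // G.Adj x w} = (N x).card := by
    intro x
    rw [Nat.card_eq_fintype_card, Fintype.card_subtype]
  -- inner count
  have hinner : ∀ x : {w : V // w ≠ v},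
      Fintype.card {y : {w : V // w ≠ v} // G.Adj x.1 y.1} = ((N x.1).erase v).card := by
    intro x
    rw [Fintype.card_congr (Equiv.subtypeSubtypeEquivSubtypeInter (fun w => w ≠ v)
      (fun w => G.Adj x.1 w)), Fintype.card_subtype]
    congr 1
    ext y
    simp [hN, Finset.mem_erase, and_comm]
  have hpairs : Nat.card {p : {w : V // w ≠ v} × {w : V // w ≠ v} // G.Adj p.1.1 p.2.1}
      = ∑ x ∈ Finset.univ.erase v, ((N x).erase v).card := by
    rw [Nat.card_eq_fintype_card,
      Fintype.card_congr (RC.pairSigma (fun a b : {w : V // w ≠ v} => G.Adj a.1 b.1)),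
      Fintype.card_sigma]
    rw [Finset.sum_congr rfl (fun x (_ : x ∈ (Finset.univ : Finset {w : V // w ≠ v})) =>
      hinner x)]
    exact (Finset.sum_subtype (Finset.univ.erase v)
      (fun x => by simp) (fun x => ((N x).erase v).card)).symm
  have hsplit : ∀ x : V, (N x).card = ((N x).erase v).card + (if v ∈ N x then 1 else 0) := by
    intro x
    by_cases h : v ∈ N x
    · rw [Finset.card_erase_of_mem h, if_pos h,
        Nat.sub_add_cancel (Finset.card_pos.2 ⟨v, h⟩)]
    · simp [Finset.erase_eq_of_notMem h, h]
  have hfilter : ((Finset.univ.erase v).filter (fun x => v ∈ N x)).card = (N v).card := by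
    congr 1
    ext x
    simp only [hN, Finset.mem_filter, Finset.mem_erase, Finset.mem_univ, true_and, and_true]
    constructor
    · rintro ⟨-, h⟩; exact h.symm
    · intro h; exact ⟨h.ne', h.symm⟩
  have hsum : ∑ x ∈ Finset.univ.erase v, (N x).card
      = (∑ x ∈ Finset.univ.erase v, ((N x).erase v).card) + (N v).card := by
    rw [← hfilter, Finset.card_filter, ← Finset.sum_add_distrib]
    exact Finset.sum_congr rfl (fun x _ => hsplit x)
  have htotal : ∑ x : V, (N x).card
      = (∑ x ∈ Finset.univ.erase v, (N x).card) + (N v).card :=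
    (Finset.sum_erase_add Finset.univ _ (Finset.mem_univ v)).symm
  simp only [hcard, hpairs]
  omega

/-- Degrees are preserved. -/
lemma RC.deg_eq [Fintype V] [Fintype V'] (h3 : 3 ≤ Fintype.card V)
    (H : RCSetup G G') (v : V) :
    Nat.card {w // G.Adj v w} = Nat.card {w' // G'.Adj (H.f v) w'} := by
  classical
  set T : ℕ := ∑ x : V, Nat.card {w // G.Adj x w} with hT
  set T' : ℕ := ∑ x' : V', Nat.card {w' // G'.Adj x' w'} with hT'
  have hC : ∀ u : V,
      Nat.card {p : {w : V // w ≠ u} × {w : V // w ≠ u} // G.Adj p.1.1 p.2.1}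
      = Nat.card {p : {w' : V' // w' ≠ H.f u} × {w' : V' // w' ≠ H.f u} //
          G'.Adj p.1.1 p.2.1} := by
    intro u
    exact Nat.card_congr (Equiv.subtypeEquiv ((H.φ u).prodCongr (H.φ u))
      (fun p => H.adj_iff u p.1 p.2))
  have key : ∀ u : V, T + 2 * Nat.card {w' // G'.Adj (H.f u) w'}
      = T' + 2 * Nat.card {w // G.Adj u w} := by
    intro u
    have h1 := RC.aux_pairs G u
    have h2 := RC.aux_pairs G' (H.f u)
    have h3 := hC u
    omega
  have hsum : Fintype.card V * T + 2 * T' = Fintype.card V * T' + 2 * T := by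
    have := Finset.sum_congr rfl (fun u (_ : u ∈ (Finset.univ : Finset V)) => key u)
    rw [Finset.sum_add_distrib, Finset.sum_add_distrib, Finset.sum_const,
      Finset.sum_const, ← Finset.mul_sum, ← Finset.mul_sum,
      Equiv.sum_comp H.f (fun x' => Nat.card {w' // G'.Adj x' w'})] at this
    simp only [Finset.card_univ, smul_eq_mul] at this
    rw [← hT, ← hT'] at this
    exact this
  have hTT : T = T' := by
    have hn := h3
    rcases Nat.le_total T T' with hle | hle
    · obtain ⟨d, hd⟩ := Nat.exists_eq_add_of_le hle
      rw [hd, Nat.mul_add] at hsum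
      have h3d : 3 * d ≤ Fintype.card V * d := Nat.mul_le_mul_right d hn
      have hd0 : d = 0 := by linarith
      omega
    · obtain ⟨d, hd⟩ := Nat.exists_eq_add_of_le hle
      rw [hd, Nat.mul_add] at hsum
      have h3d : 3 * d ≤ Fintype.card V * d := Nat.mul_le_mul_right d hn
      have hd0 : d = 0 := by linarith
      omega
  have := key v
  omega

lemma RC.card_compl {α : Type*} [Fintype α] (P Q : α → Prop)
    (h : Nat.card {x // P x} = Nat.card {x // Q x}) :
    Nat.card {x // ¬P x ∧ Q x} = Nat.card {x // P x ∧ ¬Q x} := by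
  classical
  simp only [Nat.card_eq_fintype_card, Fintype.card_subtype] at *
  have h1 : (Finset.univ.filter fun x => P x ∧ Q x).card
      + (Finset.univ.filter fun x => P x ∧ ¬Q x).card
      = (Finset.univ.filter fun x => P x).card := by
    rw [← Finset.filter_filter, ← Finset.filter_filter]
    exact Finset.card_filter_add_card_filter_not (fun x => Q x)
  have h2 : (Finset.univ.filter fun x => Q x ∧ P x).card
      + (Finset.univ.filter fun x => Q x ∧ ¬P x).card
      = (Finset.univ.filter fun x => Q x).card := by
    rw [← Finset.filter_filter, ← Finset.filter_filter]
    exact Finset.card_filter_add_card_filter_not (fun x => P x)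
  have e1 : (Finset.univ.filter fun x => Q x ∧ P x)
      = (Finset.univ.filter fun x => P x ∧ Q x) := by
    simp [and_comm]
  have e2 : (Finset.univ.filter fun x => ¬P x ∧ Q x)
      = (Finset.univ.filter fun x => Q x ∧ ¬P x) := by
    simp [and_comm]
  rw [e1] at h2
  rw [e2]
  omega

/-- For every vertex `v`, the number of vertices `w` with a normal-arrow `v ⟶ w` equals the
number of vertices `u` with a dashed-arrow `v ⇢ u`. -/
theorem stmt_0 [Fintype V] [Fintype V']
    (h3 : 3 ≤ Fintype.card V) (h3' : 3 ≤ Fintype.card V')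
    (H : RCSetup G G') (v : V) :
    {w : V | H.Normal v w}.ncard = {u : V | H.Dashed v u}.ncard := by
  classical
  rw [← Nat.card_coe_set_eq, ← Nat.card_coe_set_eq]
  -- the normal-arrow targets, transported to `{x // x ≠ v}`
  have e1 : {w : V // H.Normal v w} ≃
      {w : {x : V // x ≠ v} // ¬G.Adj v w.1 ∧ G'.Adj (H.f v) (H.φ v w).1} :=
    { toFun := fun w => ⟨⟨w.1, w.2.choose⟩, w.2.choose_spec⟩
      invFun := fun w => ⟨w.1.1, w.1.2, w.2⟩
      left_inv := fun w => rfl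
      right_inv := fun w => rfl }
  -- the dashed-arrow targets, transported to `{x // x ≠ v}`
  have e2 : {u : V // H.Dashed v u} ≃
      {w : {x : V // x ≠ v} // G.Adj v w.1 ∧ ¬G'.Adj (H.f v) (H.φ v w).1} :=
    { toFun := fun u => ⟨(H.φ v).symm ⟨H.f u.1, u.2.choose⟩, u.2.choose_spec.2, by
        rw [Equiv.apply_symm_apply]
        exact u.2.choose_spec.1⟩
      invFun := fun w => ⟨H.f.symm (H.φ v w.1).1, by
        have hx : H.f (H.f.symm (H.φ v w.1).1) = (H.φ v w.1).1 := H.f.apply_symm_apply _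
        have hne : H.f (H.f.symm (H.φ v w.1).1) ≠ H.f v := by
          rw [hx]; exact (H.φ v w.1).2
        refine ⟨hne, ?_, ?_⟩
        · rw [hx]; exact w.2.2
        · have h1 : (⟨H.f (H.f.symm (H.φ v w.1).1), hne⟩ : {x' : V' // x' ≠ H.f v})
              = H.φ v w.1 := Subtype.ext hx
          rw [h1, Equiv.symm_apply_apply]
          exact w.2.1⟩
      left_inv := fun u => by
        apply Subtype.ext
        simp
      right_inv := fun w => by
        apply Subtype.ext
        have key : ∀ x : {x' : V' // x' ≠ H.f v}, x = H.φ v w.1 → (H.φ v).symm x = w.1 :=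
          fun x hx => by rw [hx, Equiv.symm_apply_apply]
        exact key _ (Subtype.ext (H.f.apply_symm_apply _)) }
  have hA : Nat.card {w : {x : V // x ≠ v} // G.Adj v w.1}
      = Nat.card {w : V // G.Adj v w} :=
    Nat.card_congr ((Equiv.subtypeSubtypeEquivSubtypeInter _ _).trans
      (Equiv.subtypeEquivRight (fun y => ⟨fun h => h.2, fun h => ⟨h.ne', h⟩⟩)))
  have hB : Nat.card {w : {x : V // x ≠ v} // G'.Adj (H.f v) (H.φ v w).1}
      = Nat.card {w' : V' // G'.Adj (H.f v) w'} :=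
    Nat.card_congr ((Equiv.subtypeEquiv (H.φ v) (fun w => Iff.rfl)).trans
      ((Equiv.subtypeSubtypeEquivSubtypeInter _ _).trans
        (Equiv.subtypeEquivRight (fun y => ⟨fun h => h.2, fun h => ⟨h.ne', h⟩⟩))))
  have hdeg := RC.deg_eq h3 H v
  calc Nat.card {w : V | H.Normal v w}
      = Nat.card {w : {x : V // x ≠ v} // ¬G.Adj v w.1 ∧ G'.Adj (H.f v) (H.φ v w).1} :=
        Nat.card_congr e1
    _ = Nat.card {w : {x : V // x ≠ v} // G.Adj v w.1 ∧ ¬G'.Adj (H.f v) (H.φ v w).1} :=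
        RC.card_compl _ _ (by rw [hA, hB, hdeg])
    _ = Nat.card {u : V | H.Dashed v u} := (Nat.card_congr e2).symm
end

section
/- For any vertex v ∈ V(Γ), the following are equivalent: (i) there is no normal-arrow arising from v in the associated directed graph Γ̃ (and hence no dashed-arrow arising from v); (ii) the isomorphism φ_v : Γ−v → Γ'−f(v) extends to an isomorphism Φ : Γ → Γ' with Φ restricted to V(Γ)∖{v} equal to φ_v and Φ(v) = f(v). -/
variable {V V' : Type*} {G : SimpleGraph V} {G' : SimpleGraph V'}

open Finset

open scoped Classical

/-- The bijection `φ v` carries the punctured neighborhood of `w` to the punctured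
neighborhood of `φ v w`. -/
lemma RCSetup.erase_card_eq [Fintype V] [Fintype V'] (H : RCSetup G G') (v : V)
    (w : {w : V // w ≠ v}) :
    ((G.neighborFinset w.1).erase v).card
      = ((G'.neighborFinset (H.φ v w).1).erase (H.f v)).card := by
  apply Finset.card_bij (fun u hu => (H.φ v ⟨u, Finset.ne_of_mem_erase hu⟩).1)
  · intro u hu
    rw [Finset.mem_erase, SimpleGraph.mem_neighborFinset] at hu ⊢
    exact ⟨(H.φ v ⟨u, hu.1⟩).2, (H.adj_iff v w ⟨u, hu.1⟩).mp hu.2⟩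
  · intro a ha b hb hab
    have := (H.φ v).injective (Subtype.ext hab)
    exact congrArg Subtype.val this
  · intro u' hu'
    rw [Finset.mem_erase, SimpleGraph.mem_neighborFinset] at hu'
    refine ⟨((H.φ v).symm ⟨u', hu'.1⟩).1, ?_, ?_⟩
    · rw [Finset.mem_erase, SimpleGraph.mem_neighborFinset]
      refine ⟨((H.φ v).symm ⟨u', hu'.1⟩).2, ?_⟩
      apply (H.adj_iff v w ((H.φ v).symm ⟨u', hu'.1⟩)).mpr
      rw [Equiv.apply_symm_apply]
      exact hu'.2
    · show ((H.φ v) ((H.φ v).symm ⟨u', hu'.1⟩)).1 = u'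
      rw [Equiv.apply_symm_apply]

/-- The punctured-neighborhood card plus the indicator of adjacency to `v` is the degree. -/
lemma erase_card_add (G : SimpleGraph V) [Fintype V] (v w : V) :
    ((G.neighborFinset w).erase v).card + (if G.Adj w v then 1 else 0) = G.degree w := by
  by_cases h : G.Adj w v
  · have hv : v ∈ G.neighborFinset w := by rwa [SimpleGraph.mem_neighborFinset]
    rw [Finset.card_erase_of_mem hv, if_pos h]
    have : 0 < (G.neighborFinset w).card := Finset.card_pos.mpr ⟨v, hv⟩
    unfold SimpleGraph.degree
    omega
  · rw [Finset.erase_eq_of_notMem (by rwa [SimpleGraph.mem_neighborFinset]), if_neg h]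
    rfl

/-- Per-vertex counting identity. -/
lemma sum_erase_card (G : SimpleGraph V) [Fintype V] (v : V) :
    (∑ w ∈ Finset.univ.erase v, ((G.neighborFinset w).erase v).card) + 2 * G.degree v
      = ∑ w, G.degree w := by
  have h1 : ∑ w ∈ Finset.univ.erase v, G.degree w + G.degree v = ∑ w, G.degree w :=
    Finset.sum_erase_add _ _ (Finset.mem_univ v)
  have h2 : ∀ w ∈ Finset.univ.erase v,
      G.degree w = ((G.neighborFinset w).erase v).card + (if G.Adj w v then 1 else 0) :=
    fun w _ => (erase_card_add G v w).symm
  rw [Finset.sum_congr rfl h2, Finset.sum_add_distrib] at h1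
  have h3 : (∑ w ∈ Finset.univ.erase v, if G.Adj w v then 1 else 0) = G.degree v := by
    rw [← Finset.card_filter]
    congr 1
    ext w
    simp only [Finset.mem_filter, Finset.mem_erase, Finset.mem_univ,
      SimpleGraph.mem_neighborFinset, and_true, true_and]
    constructor
    · exact fun h => h.2.symm
    · exact fun h => ⟨h.ne', h.symm⟩
  rw [h3] at h1
  omega

/-- The degree equality `deg v = deg (f v)`. -/
lemma RCSetup.degree_eq [Fintype V] [Fintype V']
    (h3 : 3 ≤ Fintype.card V) (H : RCSetup G G') (v : V) :
    G.degree v = G'.degree (H.f v) := by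
  -- per-vertex identity relating the two total degree sums
  have key : ∀ u : V, (∑ w, G.degree w) + 2 * G'.degree (H.f u)
      = (∑ w', G'.degree w') + 2 * G.degree u := by
    intro u
    have hs : (∑ w ∈ Finset.univ.erase u, ((G.neighborFinset w).erase u).card)
        = ∑ w' ∈ Finset.univ.erase (H.f u), ((G'.neighborFinset w').erase (H.f u)).card := by
      apply Finset.sum_bij (fun w hw => (H.φ u ⟨w, Finset.ne_of_mem_erase hw⟩).1)
      · intro a ha
        exact Finset.mem_erase.mpr ⟨(H.φ u ⟨a, Finset.ne_of_mem_erase ha⟩).2, Finset.mem_univ _⟩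
      · intro a ha b hb hab
        exact congrArg Subtype.val ((H.φ u).injective (Subtype.ext hab))
      · intro w' hw'
        refine ⟨((H.φ u).symm ⟨w', Finset.ne_of_mem_erase hw'⟩).1,
          Finset.mem_erase.mpr ⟨((H.φ u).symm ⟨w', Finset.ne_of_mem_erase hw'⟩).2,
            Finset.mem_univ _⟩, ?_⟩
        show ((H.φ u) ((H.φ u).symm _)).1 = w'
        rw [Equiv.apply_symm_apply]
      · intro a ha
        exact H.erase_card_eq u ⟨a, Finset.ne_of_mem_erase ha⟩
    have e1 := sum_erase_card G u
    have e2 := sum_erase_card G' (H.f u)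
    omega
  -- sum the identity over all u to get equality of total degree sums
  have hsum : ∀ u : V, Fintype.card V * (∑ w, G.degree w) + 2 * (∑ w', G'.degree w')
      = Fintype.card V * (∑ w', G'.degree w') + 2 * (∑ w, G.degree w) := by
    intro u
    have := Finset.sum_congr rfl (fun u (_ : u ∈ (Finset.univ : Finset V)) => key u)
    simp only [Finset.sum_add_distrib, Finset.sum_const, Finset.card_univ, smul_eq_mul,
      ← Finset.mul_sum] at this
    rw [Equiv.sum_comp H.f (fun w' => G'.degree w')] at this
    omega
  have hT : (∑ w, G.degree w) = ∑ w', G'.degree w' := by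
    obtain ⟨k, hk⟩ : ∃ k, Fintype.card V = k + 3 := ⟨Fintype.card V - 3, by omega⟩
    have h := hsum v
    rw [hk] at h
    have h' : (k + 1) * (∑ w, G.degree w) = (k + 1) * (∑ w', G'.degree w') := by ring_nf at h ⊢; omega
    exact Nat.eq_of_mul_eq_mul_left (Nat.succ_pos k) h'
  have := key v
  omega

/-- For a vertex `v`, there is no normal-arrow arising from `v` in the associated directed graph
iff the isomorphism `φ v : Γ − v → Γ' − f v` extends to an isomorphism `Φ : Γ → Γ'` with
`Φ(v) = f(v)`. -/
theorem stmt_1 [Fintype V] [Fintype V']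
    (h3 : 3 ≤ Fintype.card V) (h3' : 3 ≤ Fintype.card V')
    (H : RCSetup G G') (v : V) :
    (∀ w : V, ¬ H.Normal v w) ↔
      ∃ Φ : G ≃g G', (∀ (w : V) (h : w ≠ v), Φ w = (H.φ v ⟨w, h⟩).1) ∧ Φ v = H.f v := by
  constructor
  · intro hN
    -- key adjacency equivalence at v
    have hback : ∀ (w : V) (h : w ≠ v), G'.Adj (H.f v) (H.φ v ⟨w, h⟩).1 → G.Adj v w := by
      intro w h hadj
      by_contra hna
      exact hN w ⟨h, hna, hadj⟩
    have hfwd : ∀ (w : V) (h : w ≠ v), G.Adj v w → G'.Adj (H.f v) (H.φ v ⟨w, h⟩).1 := by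
      -- injection from neighbors of f v to neighbors of v, equal cards, hence surjective
      have hdeg : (G.neighborFinset v).card ≤ (G'.neighborFinset (H.f v)).card :=
        le_of_eq (H.degree_eq h3 v)
      have hsurj := Finset.surj_on_of_inj_on_of_card_le
        (s := G'.neighborFinset (H.f v)) (t := G.neighborFinset v)
        (fun u' hu' => ((H.φ v).symm ⟨u',
          (G'.ne_of_adj ((SimpleGraph.mem_neighborFinset _ _ _).mp hu')).symm⟩).1)
        (fun u' hu' => by
          rw [SimpleGraph.mem_neighborFinset] at hu' ⊢
          set x := (H.φ v).symm ⟨u', (G'.ne_of_adj hu').symm⟩ with hx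
          have := hback x.1 x.2
          rw [show (⟨x.1, x.2⟩ : {w : V // w ≠ v}) = x from rfl, hx,
            Equiv.apply_symm_apply] at this
          exact this hu')
        (fun a b ha hb hab => by
          have : (⟨a, _⟩ : {w' : V' // w' ≠ H.f v}) = ⟨b, _⟩ :=
            (H.φ v).symm.injective (Subtype.ext hab)
          exact congrArg Subtype.val this)
        hdeg
      intro w h hadj
      obtain ⟨u', hu', heq⟩ := hsurj w ((SimpleGraph.mem_neighborFinset _ _ _).mpr hadj)
      rw [SimpleGraph.mem_neighborFinset] at hu'
      have : H.φ v ⟨w, h⟩ = ⟨u', (G'.ne_of_adj hu').symm⟩ := by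
        apply (H.φ v).symm.injective
        rw [Equiv.symm_apply_apply]
        exact Subtype.ext heq
      rw [this]
      exact hu'
    -- build the extension
    refine ⟨⟨{
      toFun := fun w => if h : w = v then H.f v else (H.φ v ⟨w, h⟩).1
      invFun := fun w' => if h : w' = H.f v then v else ((H.φ v).symm ⟨w', h⟩).1
      left_inv := fun w => by
        dsimp only
        by_cases h : w = v
        · simp [h]
        · rw [dif_neg h, dif_neg (H.φ v ⟨w, h⟩).2]
          show ((H.φ v).symm ⟨(H.φ v ⟨w, h⟩).1, (H.φ v ⟨w, h⟩).2⟩).1 = w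
          rw [show (⟨(H.φ v ⟨w, h⟩).1, (H.φ v ⟨w, h⟩).2⟩ : {w' : V' // w' ≠ H.f v})
              = H.φ v ⟨w, h⟩ from rfl, Equiv.symm_apply_apply]
      right_inv := fun w' => by
        dsimp only
        by_cases h : w' = H.f v
        · simp [h]
        · rw [dif_neg h, dif_neg ((H.φ v).symm ⟨w', h⟩).2]
          show ((H.φ v) ⟨((H.φ v).symm ⟨w', h⟩).1, ((H.φ v).symm ⟨w', h⟩).2⟩).1 = w'
          rw [show (⟨((H.φ v).symm ⟨w', h⟩).1, ((H.φ v).symm ⟨w', h⟩).2⟩ : {w : V // w ≠ v})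
              = (H.φ v).symm ⟨w', h⟩ from rfl, Equiv.apply_symm_apply] }, ?_⟩, ?_, ?_⟩
    · -- map_rel_iff
      intro a b
      simp only [Equiv.coe_fn_mk]
      by_cases ha : a = v <;> by_cases hb : b = v
      · subst ha; subst hb; simp
      · subst ha
        rw [dif_pos rfl, dif_neg hb]
        exact ⟨fun h => hback b hb h, fun h => hfwd b hb h⟩
      · subst hb
        rw [dif_pos rfl, dif_neg ha]
        constructor
        · intro h
          exact (hback a ha h.symm).symm
        · intro h
          exact (hfwd a ha h.symm).symm
      · rw [dif_neg ha, dif_neg hb]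
        exact (H.adj_iff v ⟨a, ha⟩ ⟨b, hb⟩).symm
    · intro w h
      simp only [RelIso.coe_fn_mk, Equiv.coe_fn_mk]
      rw [dif_neg h]
    · simp
  · rintro ⟨Φ, hΦ, hΦv⟩ w ⟨h, hna, hadj⟩
    apply hna
    have : G'.Adj (Φ v) (Φ w) := by rw [hΦv, hΦ w h]; exact hadj
    exact Φ.map_rel_iff.mp this
end

section
/- If there exists a vertex v ∈ V(Γ) such that there is no normal-arrow arising from v in the associated directed graph Γ̃, then the graphs Γ and Γ' are isomorphic. -/
variable {V V' : Type*} {G : SimpleGraph V} {G' : SimpleGraph V'}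

open Finset

private lemma pair_card_eq_sum [Fintype V] [DecidableRel G.Adj] :
    ((univ : Finset (V × V)).filter fun p => G.Adj p.1 p.2).card = ∑ x, G.degree x := by
  rw [Finset.card_filter, ← Finset.univ_product_univ, Finset.sum_product]
  refine Finset.sum_congr rfl fun x _ => ?_
  rw [SimpleGraph.degree, SimpleGraph.neighborFinset_eq_filter, Finset.card_filter]

private lemma pair_card_split [Fintype V] [DecidableEq V] [DecidableRel G.Adj] (u : V) :
    ((univ : Finset (V × V)).filter fun p => G.Adj p.1 p.2).card
      = ((univ : Finset (V × V)).filter fun p => G.Adj p.1 p.2 ∧ p.1 ≠ u ∧ p.2 ≠ u).card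
        + 2 * G.degree u := by
  classical
  set s := (univ : Finset (V × V)).filter fun p => G.Adj p.1 p.2 with hs
  have hsplit := Finset.card_filter_add_card_filter_not
    (s := s) (p := fun p => p.1 = u ∨ p.2 = u)
  have hor : s.filter (fun p => p.1 = u ∨ p.2 = u)
      = s.filter (fun p => p.1 = u) ∪ s.filter (fun p => p.2 = u) := Finset.filter_or _ _ _
  have hdisj : Disjoint (s.filter (fun p => p.1 = u)) (s.filter (fun p => p.2 = u)) := by
    rw [Finset.disjoint_left]
    rintro ⟨a, b⟩ h1 h2
    simp only [hs, Finset.mem_filter, Finset.mem_univ, true_and] at h1 h2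
    obtain ⟨ha, h1⟩ := h1
    obtain ⟨-, h2⟩ := h2
    have h1' : a = u := h1
    have h2' : b = u := h2
    subst h1'; subst h2'
    exact G.loopless.irrefl _ ha
  have hc1 : (s.filter fun p => p.1 = u).card = G.degree u := by
    have he : (s.filter fun p => p.1 = u) = {u} ×ˢ G.neighborFinset u := by
      ext ⟨a, b⟩
      simp only [hs, Finset.filter_filter, Finset.mem_filter, Finset.mem_univ, true_and,
        Finset.mem_product, Finset.mem_singleton, SimpleGraph.mem_neighborFinset]
      constructor
      · rintro ⟨h, rfl⟩; exact ⟨rfl, h⟩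
      · rintro ⟨rfl, h⟩; exact ⟨h, rfl⟩
    rw [he, Finset.card_product, Finset.card_singleton, one_mul]
    rfl
  have hc2 : (s.filter fun p => p.2 = u).card = G.degree u := by
    have he : (s.filter fun p => p.2 = u) = G.neighborFinset u ×ˢ {u} := by
      ext ⟨a, b⟩
      simp only [hs, Finset.filter_filter, Finset.mem_filter, Finset.mem_univ, true_and,
        Finset.mem_product, Finset.mem_singleton, SimpleGraph.mem_neighborFinset]
      constructor
      · rintro ⟨h, rfl⟩; exact ⟨h.symm, rfl⟩
      · rintro ⟨h, rfl⟩; exact ⟨h.symm, rfl⟩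
    rw [he, Finset.card_product, Finset.card_singleton, mul_one]
    rfl
  have hneg : s.filter (fun p => ¬(p.1 = u ∨ p.2 = u))
      = (univ : Finset (V × V)).filter fun p => G.Adj p.1 p.2 ∧ p.1 ≠ u ∧ p.2 ≠ u := by
    simp only [hs, Finset.filter_filter, not_or, Ne, and_assoc]
  have hu := Finset.card_union_of_disjoint hdisj
  rw [hor] at hsplit
  rw [hneg, hu, hc1, hc2] at hsplit
  omega

private lemma pair_card_del [Fintype V] [Fintype V'] [DecidableEq V] [DecidableEq V']
    [DecidableRel G.Adj] [DecidableRel G'.Adj] (H : RCSetup G G') (u : V) :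
    ((univ : Finset (V × V)).filter fun p => G.Adj p.1 p.2 ∧ p.1 ≠ u ∧ p.2 ≠ u).card
      = ((univ : Finset (V' × V')).filter
          fun p => G'.Adj p.1 p.2 ∧ p.1 ≠ H.f u ∧ p.2 ≠ H.f u).card := by
  rw [← Fintype.card_subtype, ← Fintype.card_subtype]
  refine Fintype.card_congr ?_
  refine
    { toFun := fun x => ⟨((H.φ u ⟨x.1.1, x.2.2.1⟩).1, (H.φ u ⟨x.1.2, x.2.2.2⟩).1),
        (H.adj_iff u _ _).1 x.2.1, (H.φ u _).2, (H.φ u _).2⟩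
      invFun := fun y => ⟨(((H.φ u).symm ⟨y.1.1, y.2.2.1⟩).1, ((H.φ u).symm ⟨y.1.2, y.2.2.2⟩).1),
        ?_, ((H.φ u).symm _).2, ((H.φ u).symm _).2⟩
      left_inv := ?_
      right_inv := ?_ }
  · refine (H.adj_iff u ((H.φ u).symm ⟨y.1.1, y.2.2.1⟩) ((H.φ u).symm ⟨y.1.2, y.2.2.2⟩)).2 ?_
    simpa using y.2.1
  · rintro ⟨⟨a, b⟩, hab, ha, hb⟩
    apply Subtype.ext
    simp
  · rintro ⟨⟨a, b⟩, hab, ha, hb⟩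
    apply Subtype.ext
    simp

/-- If some vertex `v` has no normal-arrow arising from it in the associated directed graph,
then `Γ ≅ Γ'`. -/
theorem stmt_2 [Fintype V] [Fintype V']
    (h3 : 3 ≤ Fintype.card V) (h3' : 3 ≤ Fintype.card V')
    (H : RCSetup G G')
    (h : ∃ v : V, ∀ w : V, ¬ H.Normal v w) :
    Nonempty (G ≃g G') := by
  classical
  obtain ⟨v, hv⟩ := h
  set A := ((univ : Finset (V × V)).filter fun p => G.Adj p.1 p.2).card with hA_def
  set A' := ((univ : Finset (V' × V')).filter fun p => G'.Adj p.1 p.2).card with hA'_def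
  have hAA : ∀ u : V, A + 2 * G'.degree (H.f u) = A' + 2 * G.degree u := by
    intro u
    have h1 := pair_card_split (G := G) u
    have h2 := pair_card_split (G := G') (H.f u)
    have h3 := pair_card_del H u
    omega
  have hcV : Fintype.card V' = Fintype.card V := (Fintype.card_congr H.f).symm
  -- A = A'
  have hA : A = A' := by
    have hsum : ∑ u : V, (A + 2 * G'.degree (H.f u)) = ∑ u : V, (A' + 2 * G.degree u) :=
      Finset.sum_congr rfl fun u _ => hAA u
    have hcomp : ∑ u : V, G'.degree (H.f u) = ∑ x : V', G'.degree x := Equiv.sum_comp H.f (fun x => G'.degree x)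
    have hsA : ∑ x : V, G.degree x = A := (pair_card_eq_sum (G := G)).symm
    have hsA' : ∑ x : V', G'.degree x = A' := (pair_card_eq_sum (G := G')).symm
    simp only [Finset.sum_add_distrib, Finset.sum_const, Finset.card_univ, smul_eq_mul,
      ← Finset.mul_sum] at hsum
    rw [hcomp, hsA, hsA'] at hsum
    obtain ⟨m, hm⟩ : ∃ m, Fintype.card V = m + 3 := ⟨Fintype.card V - 3, by omega⟩
    rw [hm] at hsum
    have key : (m + 1) * A = (m + 1) * A' := by
      have e1 : (m + 3) * A = m * A + 3 * A := by ring
      have e2 : (m + 3) * A' = m * A' + 3 * A' := by ring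
      rw [e1, e2] at hsum
      have e3 : (m + 1) * A = m * A + A := by ring
      have e4 : (m + 1) * A' = m * A' + A' := by ring
      rw [e3, e4]
      set x := m * A
      set y := m * A'
      omega
    exact Nat.eq_of_mul_eq_mul_left (Nat.succ_pos m) key
  have hdeg : ∀ u : V, G'.degree (H.f u) = G.degree u := by
    intro u; have := hAA u; omega
  -- no normal arrow: nonneighbors go to nonneighbors
  have hNoNorm : ∀ w : {w : V // w ≠ v}, ¬ G.Adj v w.1 → ¬ G'.Adj (H.f v) (H.φ v w).1 := by
    rintro ⟨w, hw⟩ hna hadj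
    exact hv w ⟨hw, hna, hadj⟩
  -- cardinalities of nonneighbor sets agree
  have hcPV : Fintype.card {w : {w : V // w ≠ v} // G.Adj v w.1} = G.degree v := by
    rw [Fintype.card_subtype]
    rw [SimpleGraph.degree, SimpleGraph.neighborFinset_eq_filter]
    refine Finset.card_bij (fun w _ => w.1) ?_ ?_ ?_
    · rintro ⟨w, hw⟩ hmem
      simp only [Finset.mem_filter, Finset.mem_univ, true_and] at hmem ⊢
      exact hmem
    · rintro ⟨a, _⟩ _ ⟨b, _⟩ _ hab
      simp only at hab
      exact Subtype.ext hab
    · intro b hb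
      simp only [Finset.mem_filter, Finset.mem_univ, true_and] at hb
      exact ⟨⟨b, fun hbv => G.loopless.irrefl v (hbv ▸ hb)⟩, by simpa using hb, rfl⟩
  have hcPV' : Fintype.card {w' : {w' : V' // w' ≠ H.f v} // G'.Adj (H.f v) w'.1}
      = G'.degree (H.f v) := by
    rw [Fintype.card_subtype]
    rw [SimpleGraph.degree, SimpleGraph.neighborFinset_eq_filter]
    refine Finset.card_bij (fun w _ => w.1) ?_ ?_ ?_
    · rintro ⟨w, hw⟩ hmem
      simp only [Finset.mem_filter, Finset.mem_univ, true_and] at hmem ⊢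
      exact hmem
    · rintro ⟨a, _⟩ _ ⟨b, _⟩ _ hab
      simp only at hab
      exact Subtype.ext hab
    · intro b hb
      simp only [Finset.mem_filter, Finset.mem_univ, true_and] at hb
      exact ⟨⟨b, fun hbv => G'.loopless.irrefl (H.f v) (hbv ▸ hb)⟩, by simpa using hb, rfl⟩
  have hsubV : Fintype.card {w : V // w ≠ v} = Fintype.card V - 1 := by
    have := Fintype.card_subtype_compl (fun w : V => w = v)
    simpa [Fintype.card_subtype_eq] using this
  have hsubV' : Fintype.card {w' : V' // w' ≠ H.f v} = Fintype.card V - 1 := by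
    have := Fintype.card_subtype_compl (fun w' : V' => w' = H.f v)
    simpa [Fintype.card_subtype_eq, hcV] using this
  have hcard : Fintype.card {w : {w : V // w ≠ v} // ¬ G.Adj v w.1}
      = Fintype.card {w' : {w' : V' // w' ≠ H.f v} // ¬ G'.Adj (H.f v) w'.1} := by
    have c1 := Fintype.card_subtype_compl (fun w : {w : V // w ≠ v} => G.Adj v w.1)
    have c2 := Fintype.card_subtype_compl (fun w' : {w' : V' // w' ≠ H.f v} => G'.Adj (H.f v) w'.1)
    rw [c1, c2, hcPV, hcPV', hsubV, hsubV', hdeg v]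
  -- the map on nonneighbors is bijective
  let ψ : {w : {w : V // w ≠ v} // ¬ G.Adj v w.1}
      → {w' : {w' : V' // w' ≠ H.f v} // ¬ G'.Adj (H.f v) w'.1} :=
    fun w => ⟨H.φ v w.1, hNoNorm w.1 w.2⟩
  have hψinj : Function.Injective ψ := by
    rintro ⟨a, ha⟩ ⟨b, hb⟩ hab
    have : H.φ v a = H.φ v b := congrArg Subtype.val hab
    exact Subtype.ext ((H.φ v).injective this)
  have hψsurj : Function.Surjective ψ :=
    ((Fintype.bijective_iff_injective_and_card ψ).2 ⟨hψinj, hcard⟩).2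
  -- neighbors go to neighbors
  have hb : ∀ w : {w : V // w ≠ v}, G.Adj v w.1 ↔ G'.Adj (H.f v) (H.φ v w).1 := by
    intro w
    constructor
    · intro hw
      by_contra hn
      obtain ⟨⟨s, hs⟩, he⟩ := hψsurj ⟨H.φ v w, hn⟩
      have h1 : H.φ v s = H.φ v w := congrArg Subtype.val he
      have : s = w := (H.φ v).injective h1
      exact hs (this ▸ hw)
    · intro h'
      by_contra hn
      exact hNoNorm w hn h'
  -- build the isomorphism
  refine ⟨⟨⟨fun x => if hx : x = v then H.f v else (H.φ v ⟨x, hx⟩).1,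
    fun y => if hy : y = H.f v then v else ((H.φ v).symm ⟨y, hy⟩).1, ?_, ?_⟩, ?_⟩⟩
  · intro x
    dsimp only
    by_cases hx : x = v
    · simp [hx]
    · rw [dif_neg hx, dif_neg (H.φ v ⟨x, hx⟩).2]
      exact congrArg Subtype.val ((H.φ v).symm_apply_apply ⟨x, hx⟩)
  · intro y
    dsimp only
    by_cases hy : y = H.f v
    · simp [hy]
    · rw [dif_neg hy, dif_neg ((H.φ v).symm ⟨y, hy⟩).2]
      exact congrArg Subtype.val ((H.φ v).apply_symm_apply ⟨y, hy⟩)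
  · intro a b
    simp only [Equiv.coe_fn_mk]
    by_cases ha : a = v <;> by_cases hbv : b = v
    · subst ha; subst hbv; simp
    · subst ha
      rw [dif_pos rfl, dif_neg hbv]
      exact (hb ⟨b, hbv⟩).symm
    · subst hbv
      rw [dif_neg ha, dif_pos rfl]
      rw [G'.adj_comm, G.adj_comm]
      exact (hb ⟨a, ha⟩).symm
    · rw [dif_neg ha, dif_neg hbv]
      exact (H.adj_iff v ⟨a, ha⟩ ⟨b, hbv⟩).symm
end

section
/- If every vertex of the associated directed graph Γ̃ has at least one normal-arrow arising from it, then there exist a positive integer k and vertices v₁, …, v_{2k} ∈ V(Γ̃) (not necessarily pairwise distinct) such that for every i = 1, …, k there is a normal-arrow v_{2i−1} ⟶ v_{2i} and a dashed-arrow v_{2i} ⇢ v_{2i+1} in Γ̃, where v_{2k+1} := v₁. -/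
variable {V V' : Type*} {G : SimpleGraph V} {G' : SimpleGraph V'}

open Finset

/-- The punctured pair-counting equivalence coming from the card isomorphism. -/
private def RC.pairEquiv (H : RCSetup G G') (v : V) :
    {p : V × V // p.1 ≠ v ∧ p.2 ≠ v ∧ G.Adj p.1 p.2} ≃
    {p : V' × V' // p.1 ≠ H.f v ∧ p.2 ≠ H.f v ∧ G'.Adj p.1 p.2} where
  toFun p := ⟨((H.φ v ⟨p.1.1, p.2.1⟩).1, (H.φ v ⟨p.1.2, p.2.2.1⟩).1),
    (H.φ v ⟨p.1.1, p.2.1⟩).2, (H.φ v ⟨p.1.2, p.2.2.1⟩).2,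
    (H.adj_iff v ⟨p.1.1, p.2.1⟩ ⟨p.1.2, p.2.2.1⟩).mp p.2.2.2⟩
  invFun q := ⟨(((H.φ v).symm ⟨q.1.1, q.2.1⟩).1, ((H.φ v).symm ⟨q.1.2, q.2.2.1⟩).1),
    ((H.φ v).symm ⟨q.1.1, q.2.1⟩).2, ((H.φ v).symm ⟨q.1.2, q.2.2.1⟩).2, by
      refine (H.adj_iff v ((H.φ v).symm ⟨q.1.1, q.2.1⟩) ((H.φ v).symm ⟨q.1.2, q.2.2.1⟩)).mpr ?_
      simp only [Equiv.apply_symm_apply]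
      exact q.2.2.2⟩
  left_inv := by rintro ⟨⟨x, y⟩, hx, hy, hA⟩; simp
  right_inv := by rintro ⟨⟨x, y⟩, hx, hy, hA⟩; simp

private lemma RC.split {W : Type*} [Fintype W] [DecidableEq W] (K : SimpleGraph W) [DecidableRel K.Adj]
    (w : W) : (∑ x : W, ∑ y : W, if x ≠ w ∧ y ≠ w ∧ K.Adj x y then 1 else 0)
      + 2 * (∑ y : W, if K.Adj w y then 1 else 0)
    = ∑ x : W, ∑ y : W, if K.Adj x y then (1 : ℕ) else 0 := by
  have key : ∀ x y : W, (if x ≠ w ∧ y ≠ w ∧ K.Adj x y then (1:ℕ) else 0)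
      + ((if x = w ∧ K.Adj x y then 1 else 0) + (if y = w ∧ K.Adj x y then 1 else 0))
      = if K.Adj x y then 1 else 0 := by
    intro x y
    by_cases hA : K.Adj x y
    · by_cases hx : x = w
      · have hy : y ≠ w := by rintro rfl; exact K.irrefl (hx ▸ hA)
        simp [hx, hy, hA]
      · by_cases hy : y = w <;> simp [hx, hy, hA]
    · simp [hA]
  have inner : ∀ x : W, (∑ y : W, if x ≠ w ∧ y ≠ w ∧ K.Adj x y then (1:ℕ) else 0)
      + ((∑ y : W, if x = w ∧ K.Adj x y then (1:ℕ) else 0)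
        + (∑ y : W, if y = w ∧ K.Adj x y then (1:ℕ) else 0))
      = ∑ y : W, if K.Adj x y then (1:ℕ) else 0 := by
    intro x
    rw [← Finset.sum_add_distrib, ← Finset.sum_add_distrib]
    exact Finset.sum_congr rfl fun y _ => key x y
  have row : (∑ x : W, ∑ y : W, if x = w ∧ K.Adj x y then (1:ℕ) else 0)
      = ∑ y : W, if K.Adj w y then 1 else 0 := by
    rw [Finset.sum_eq_single_of_mem w (Finset.mem_univ w)
      (fun b _ hb => Finset.sum_eq_zero fun y _ => by simp [hb])]
    simp
  have col : (∑ x : W, ∑ y : W, if y = w ∧ K.Adj x y then (1:ℕ) else 0)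
      = ∑ y : W, if K.Adj w y then 1 else 0 := by
    have hx : ∀ x : W, (∑ y : W, if y = w ∧ K.Adj x y then (1:ℕ) else 0)
        = if K.Adj x w then 1 else 0 := by
      intro x
      rw [Finset.sum_eq_single_of_mem w (Finset.mem_univ w)
        (fun b _ hb => by simp [hb])]
      simp
    simp only [hx]
    refine Finset.sum_congr rfl fun x _ => ?_
    have : K.Adj x w ↔ K.Adj w x := K.adj_comm x w
    simp [this]
  calc (∑ x : W, ∑ y : W, if x ≠ w ∧ y ≠ w ∧ K.Adj x y then (1:ℕ) else 0)
        + 2 * (∑ y : W, if K.Adj w y then 1 else 0)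
      = (∑ x : W, ∑ y : W, if x ≠ w ∧ y ≠ w ∧ K.Adj x y then (1:ℕ) else 0)
        + ((∑ x : W, ∑ y : W, if x = w ∧ K.Adj x y then (1:ℕ) else 0)
          + (∑ x : W, ∑ y : W, if y = w ∧ K.Adj x y then (1:ℕ) else 0)) := by
        rw [row, col]; ring
    _ = ∑ x : W, ((∑ y : W, if x ≠ w ∧ y ≠ w ∧ K.Adj x y then (1:ℕ) else 0)
        + ((∑ y : W, if x = w ∧ K.Adj x y then (1:ℕ) else 0)
          + (∑ y : W, if y = w ∧ K.Adj x y then (1:ℕ) else 0))) := by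
        rw [← Finset.sum_add_distrib, ← Finset.sum_add_distrib]
    _ = ∑ x : W, ∑ y : W, if K.Adj x y then (1:ℕ) else 0 :=
        Finset.sum_congr rfl fun x _ => inner x


/-- Degrees are preserved, and hence every vertex with a normal out-arrow has a
dashed out-arrow. -/
private lemma RC.dashed_exists [Fintype V] [Fintype V']
    (h3 : 3 ≤ Fintype.card V) (H : RCSetup G G')
    (h : ∀ v : V, ∃ w : V, H.Normal v w) (v : V) : ∃ u : V, H.Dashed v u := by
  classical
  set deg : V → ℕ := fun x => ∑ y : V, if G.Adj x y then 1 else 0 with hdeg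
  set deg' : V' → ℕ := fun x => ∑ y : V', if G'.Adj x y then 1 else 0 with hdeg'
  set D : ℕ := ∑ x : V, deg x with hD
  set D' : ℕ := ∑ x : V', deg' x with hD'
  set N : V → ℕ := fun w => ∑ x : V, ∑ y : V,
      if x ≠ w ∧ y ≠ w ∧ G.Adj x y then 1 else 0 with hN
  set N' : V' → ℕ := fun w => ∑ x : V', ∑ y : V',
      if x ≠ w ∧ y ≠ w ∧ G'.Adj x y then 1 else 0 with hN'
  have hsplit : ∀ w : V, N w + 2 * deg w = D := fun w => RC.split G w
  have hsplit' : ∀ w : V', N' w + 2 * deg' w = D' := fun w => RC.split G' w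
  have count_eq : ∀ w : V, N w = Fintype.card {p : V × V // p.1 ≠ w ∧ p.2 ≠ w ∧ G.Adj p.1 p.2} := by
    intro w
    rw [hN, Fintype.card_subtype, Finset.card_filter, Fintype.sum_prod_type]
  have count_eq' : ∀ w : V', N' w = Fintype.card {p : V' × V' // p.1 ≠ w ∧ p.2 ≠ w ∧ G'.Adj p.1 p.2} := by
    intro w
    rw [hN', Fintype.card_subtype, Finset.card_filter, Fintype.sum_prod_type]
  have hNN' : ∀ w : V, N w = N' (H.f w) := by
    intro w
    rw [count_eq w, count_eq' (H.f w)]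
    exact Fintype.card_congr (RC.pairEquiv H w)
  have key : ∀ w : V, D + 2 * deg' (H.f w) = D' + 2 * deg w := by
    intro w
    have h1 := hsplit w
    have h2 := hsplit' (H.f w)
    rw [← hNN' w] at h2
    omega
  have e2 : ∑ w : V, deg' (H.f w) = D' := by
    rw [hD']; exact Equiv.sum_comp H.f deg'
  have e3 : ∑ w : V, (D + 2 * deg' (H.f w)) = Fintype.card V * D + 2 * D' := by
    rw [Finset.sum_add_distrib, Finset.sum_const, ← Finset.mul_sum, e2]
    simp [mul_comm]
  have e4 : ∑ w : V, (D' + 2 * deg w) = Fintype.card V * D' + 2 * D := by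
    rw [Finset.sum_add_distrib, Finset.sum_const, ← Finset.mul_sum, ← hD]
    simp [mul_comm]
  have hsum : Fintype.card V * D + 2 * D' = Fintype.card V * D' + 2 * D := by
    rw [← e3, ← e4]
    exact Finset.sum_congr rfl fun w _ => key w
  have hDD' : D = D' := by
    have cancel : ∀ a c : ℕ, Fintype.card V * a + 2 * (a + c) = Fintype.card V * (a + c) + 2 * a → c = 0 := by
      intro a c hc
      rw [Nat.mul_add (Fintype.card V) a c] at hc
      have hnc : Fintype.card V * c = 2 * c := by omega
      have h3c : 3 * c ≤ Fintype.card V * c := Nat.mul_le_mul_right c h3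
      omega
    rcases le_total D D' with hle | hle
    · obtain ⟨c, hc⟩ := Nat.exists_eq_add_of_le hle
      rw [hc] at hsum
      have := cancel D c hsum
      omega
    · obtain ⟨c, hc⟩ := Nat.exists_eq_add_of_le hle
      rw [hc] at hsum
      have := cancel D' c hsum.symm
      omega
  have hdegeq : deg' (H.f v) = deg v := by have := key v; omega
  -- the two neighbour sets inside the punctured vertex set
  set A : Finset {w : V // w ≠ v} := univ.filter (fun u => G.Adj v u.1) with hA
  set B : Finset {w : V // w ≠ v} := univ.filter (fun u => G'.Adj (H.f v) ((H.φ v) u).1) with hB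
  have eA : {u : {w : V // w ≠ v} // G.Adj v u.1} ≃ {y : V // G.Adj v y} :=
    ⟨fun u => ⟨u.1.1, u.2⟩, fun y => ⟨⟨y.1, fun hy => G.irrefl (hy ▸ y.2)⟩, y.2⟩,
      fun u => rfl, fun y => rfl⟩
  have eB1 : {u : {w : V // w ≠ v} // G'.Adj (H.f v) ((H.φ v) u).1}
      ≃ {w' : {w' : V' // w' ≠ H.f v} // G'.Adj (H.f v) w'.1} :=
    (H.φ v).subtypeEquiv (fun u => Iff.rfl)
  have eB2 : {w' : {w' : V' // w' ≠ H.f v} // G'.Adj (H.f v) w'.1} ≃ {y' : V' // G'.Adj (H.f v) y'} :=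
    ⟨fun u => ⟨u.1.1, u.2⟩, fun y => ⟨⟨y.1, fun hy => G'.irrefl (hy ▸ y.2)⟩, y.2⟩,
      fun u => rfl, fun y => rfl⟩
  have hAcard : A.card = deg v := by
    have h1 : deg v = Fintype.card {y : V // G.Adj v y} := by
      rw [hdeg, Fintype.card_subtype, Finset.card_filter]
    rw [hA, ← Fintype.card_subtype, h1]
    exact Fintype.card_congr eA
  have hBcard : B.card = deg' (H.f v) := by
    have h1 : deg' (H.f v) = Fintype.card {y' : V' // G'.Adj (H.f v) y'} := by
      rw [hdeg', Fintype.card_subtype, Finset.card_filter]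
    rw [hB, ← Fintype.card_subtype, h1]
    exact Fintype.card_congr (eB1.trans eB2)
  obtain ⟨w, hwv, hnadj, hadj'⟩ := h v
  have hmem : (⟨w, hwv⟩ : {x : V // x ≠ v}) ∈ B \ A := by
    rw [Finset.mem_sdiff, hA, hB]
    simp only [Finset.mem_filter, Finset.mem_univ, true_and]
    exact ⟨hadj', hnadj⟩
  have hBA : 0 < (B \ A).card := Finset.card_pos.mpr ⟨_, hmem⟩
  have h1 := Finset.card_sdiff_add_card_inter A B
  have h2 := Finset.card_sdiff_add_card_inter B A
  rw [Finset.inter_comm] at h2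
  have hApos : 0 < (A \ B).card := by omega
  obtain ⟨u', hu'⟩ := Finset.card_pos.mp hApos
  rw [Finset.mem_sdiff, hA, hB] at hu'
  simp only [Finset.mem_filter, Finset.mem_univ, true_and] at hu'
  obtain ⟨huA, huB⟩ := hu'
  refine ⟨H.f.symm ((H.φ v) u').1, ?_⟩
  have hne : H.f (H.f.symm ((H.φ v) u').1) ≠ H.f v := by
    simp only [Equiv.apply_symm_apply]
    exact ((H.φ v) u').2
  refine ⟨hne, ?_, ?_⟩
  · simp only [Equiv.apply_symm_apply]
    exact huB
  · have hsub : (⟨H.f (H.f.symm ((H.φ v) u').1), hne⟩ : {w' : V' // w' ≠ H.f v}) = (H.φ v) u' :=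
      Subtype.ext (by simp)
    have h5 : ((H.φ v).symm ⟨H.f (H.f.symm ((H.φ v) u').1), hne⟩) = u' := by
      rw [hsub, Equiv.symm_apply_apply]
    rw [h5]
    exact huA


/-- If every vertex has at least one normal-arrow arising from it, then there is a cycle
`v₁, …, v_{2k}` (vertices not necessarily distinct, `v_{2k+1} := v₁`) with alternate
normal-arrows `v_{2i−1} ⟶ v_{2i}` and dashed-arrows `v_{2i} ⇢ v_{2i+1}`. -/
theorem stmt_3 [Fintype V] [Fintype V']
    (h3 : 3 ≤ Fintype.card V) (h3' : 3 ≤ Fintype.card V')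
    (H : RCSetup G G')
    (h : ∀ v : V, ∃ w : V, H.Normal v w) :
    ∃ (k : ℕ) (v : ℕ → V), 0 < k ∧ v (2 * k + 1) = v 1 ∧
      ∀ i : ℕ, 1 ≤ i → i ≤ k →
        H.Normal (v (2 * i - 1)) (v (2 * i)) ∧ H.Dashed (v (2 * i)) (v (2 * i + 1)) := by
    classical
  have hD : ∀ v : V, ∃ u : V, H.Dashed v u := RC.dashed_exists h3 H h
  choose nf hnf using h
  choose nd hnd using hD
  set s : V → V := fun x => nd (nf x) with hs
  have hne : Nonempty V := Fintype.card_pos_iff.mp (by omega)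
  obtain ⟨x⟩ := hne
  obtain ⟨m, n, hmn, heq⟩ := Finite.exists_ne_map_eq_of_infinite (fun i : ℕ => s^[i] x)
  suffices hgen : ∀ a b : ℕ, a < b → s^[a] x = s^[b] x →
      ∃ (k : ℕ) (v : ℕ → V), 0 < k ∧ v (2 * k + 1) = v 1 ∧
        ∀ i : ℕ, 1 ≤ i → i ≤ k →
          H.Normal (v (2 * i - 1)) (v (2 * i)) ∧ H.Dashed (v (2 * i)) (v (2 * i + 1)) by
    rcases lt_or_gt_of_ne hmn with hlt | hlt
    · exact hgen m n hlt heq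
    · exact hgen n m hlt heq.symm
  intro a b hlt heq2
  set u : V := s^[a] x with hu
  set k : ℕ := b - a with hk
  have hkpos : 0 < k := by omega
  have hcyc : s^[k] u = u := by
    rw [hu, ← Function.iterate_add_apply]
    have hba : k + a = b := by omega
    rw [hba]
    exact heq2.symm
  refine ⟨k, fun j => if j % 2 = 1 then s^[j / 2] u else nf (s^[j / 2 - 1] u), hkpos, ?_, ?_⟩
  · show (if (2 * k + 1) % 2 = 1 then s^[(2 * k + 1) / 2] u else nf (s^[(2 * k + 1) / 2 - 1] u))
        = (if 1 % 2 = 1 then s^[1 / 2] u else nf (s^[1 / 2 - 1] u))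
    have ha : (2 * k + 1) % 2 = 1 := by omega
    have hb : (2 * k + 1) / 2 = k := by omega
    rw [if_pos ha, if_pos (by norm_num : (1 : ℕ) % 2 = 1), hb]
    have : (1 : ℕ) / 2 = 0 := by norm_num
    rw [this]
    simpa using hcyc
  · intro i hi1 hik
    obtain ⟨j, rfl⟩ : ∃ j, i = j + 1 := ⟨i - 1, by omega⟩
    have e1 : 2 * (j + 1) - 1 = 2 * j + 1 := by omega
    have e2 : (2 * j + 1) % 2 = 1 := by omega
    have e3 : (2 * j + 1) / 2 = j := by omega
    have e4 : ¬ (2 * (j + 1)) % 2 = 1 := by omega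
    have e5 : 2 * (j + 1) / 2 - 1 = j := by omega
    have e6 : (2 * (j + 1) + 1) % 2 = 1 := by omega
    have e7 : (2 * (j + 1) + 1) / 2 = j + 1 := by omega
    constructor
    · show H.Normal
        (if (2 * (j + 1) - 1) % 2 = 1 then s^[(2 * (j + 1) - 1) / 2] u
          else nf (s^[(2 * (j + 1) - 1) / 2 - 1] u))
        (if (2 * (j + 1)) % 2 = 1 then s^[(2 * (j + 1)) / 2] u
          else nf (s^[(2 * (j + 1)) / 2 - 1] u))
      rw [e1, if_pos e2, e3, if_neg e4, e5]
      exact hnf (s^[j] u)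
    · show H.Dashed
        (if (2 * (j + 1)) % 2 = 1 then s^[(2 * (j + 1)) / 2] u
          else nf (s^[(2 * (j + 1)) / 2 - 1] u))
        (if (2 * (j + 1) + 1) % 2 = 1 then s^[(2 * (j + 1) + 1) / 2] u
          else nf (s^[(2 * (j + 1) + 1) / 2 - 1] u))
      rw [if_neg e4, e5, if_pos e6, e7, Function.iterate_succ_apply']
      exact hnd (nf (s^[j] u))
end

section
/- Suppose that for some positive integer k and vertices v₁, …, v_{2k} ∈ V(Γ̃) there are arrows v_{2i−1} ⟶ v_{2i} and v_{2i} ⇢ v_{2i+1} in Γ̃ for every i = 1, …, k (where v_{2k+1} := v₁), and suppose the cycle v₁, …, v_{2k} is α-type. Then there exist normal-arrows v₁ ⟶ v₂ and v₂ ⟶ v₁ in Γ̃. -/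
variable {V V' : Type*} {G : SimpleGraph V} {G' : SimpleGraph V'}

open Classical

/-- Partial version of `φ v`: defined on every vertex except `v` itself. -/
noncomputable def RCSetup.pphi (H : RCSetup G G') (v x : V) : Option V' :=
  if h : x ≠ v then some (H.φ v ⟨x, h⟩).1 else none

/-- Partial version of `(φ v)⁻¹`: defined on every vertex except `f v` itself. -/
noncomputable def RCSetup.pphiInv (H : RCSetup G G') (v : V) (x' : V') : Option V :=
  if h : x' ≠ H.f v then some ((H.φ v).symm ⟨x', h⟩).1 else none

/-- The `j`-th (partial) map in the alternating composition attached to a cycle `w`: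
`φ_{w j}` if `j` is odd and `φ_{w j}⁻¹` if `j` is even, acting on the disjoint union
`V ⊕ V'`. -/
noncomputable def RCSetup.step (H : RCSetup G G') (w : ℕ → V) (j : ℕ) : V ⊕ V' → Option (V ⊕ V')
  | Sum.inl x => if j % 2 = 1 then (H.pphi (w j) x).map Sum.inr else none
  | Sum.inr x' => if j % 2 = 0 then (H.pphiInv (w j) x').map Sum.inl else none

/-- `chainDown H w lo m z` applies the partial maps `step (lo+m-1), …, step (lo+1), step lo`
to `z`, innermost first (so `step lo` is applied last, i.e. outermost). -/
noncomputable def RCSetup.chainDown (H : RCSetup G G') (w : ℕ → V) (lo : ℕ) :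
    ℕ → Option (V ⊕ V') → Option (V ⊕ V')
  | 0, z => z
  | (m + 1), z => H.chainDown w lo m (z.bind (H.step w (lo + m)))

/-- The innermost argument used to compute the `i`-th term of the sequences attached to a
cycle `w`: `w i` if `i` is even, and `f (w i)` if `i` is odd. -/
noncomputable def RCSetup.inner (H : RCSetup G G') (w : ℕ → V) (i : ℕ) : V ⊕ V' :=
  if i % 2 = 0 then Sum.inl (w i) else Sum.inr (H.f (w i))

/-- The partial sequence `(b'_i)` in `V'` attached to a cycle `w` (starting at `w 1`):
`b'_1 = f (w 1)`, `b'_2 = φ_{w 1}(w 2)`, `b'_3 = φ_{w 1}(φ_{w 2}⁻¹(f (w 3)))`, …;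
a term is `none` whenever some intermediate value is outside the domain of the next map. -/
noncomputable def RCSetup.bSeq' (H : RCSetup G G') (w : ℕ → V) (i : ℕ) : Option V' :=
  match H.chainDown w 1 (i - 1) (some (H.inner w i)) with
  | some (Sum.inr y) => some y
  | _ => none

/-- The partial sequence `(b_i)` in `V` attached to a cycle `w` (starting at `w 1`):
`b_1 = w 2`, `b_2 = φ_{w 2}⁻¹(f (w 3))`, `b_3 = φ_{w 2}⁻¹(φ_{w 3}(w 4))`, …. -/
noncomputable def RCSetup.bSeq (H : RCSetup G G') (w : ℕ → V) (i : ℕ) : Option V :=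
  match H.chainDown w 2 (i - 1) (some (H.inner w (i + 1))) with
  | some (Sum.inl y) => some y
  | _ => none

/-- Cyclic reading of the vertices `v 1, …, v (2k)` of a cycle: `cyc k v m = v m` for
`1 ≤ m ≤ 2k`, extended `2k`-periodically (in particular `cyc k v 0 = v (2k)`). -/
def cyc (k : ℕ) (v : ℕ → V) (m : ℕ) : V := v ((m + 2 * k - 1) % (2 * k) + 1)

/-- The cycle `v 1, …, v (2k)` (with alternate normal- and dashed-arrows) is α-type:
there is `n₀ ≥ 1` such that for every `t = 0, …, k−1`, the sequences `b'^{(2t)}` and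
`b^{(2t+1)}` obtained by starting the cycle at `v (2t+1)` are defined exactly for
`1 ≤ i ≤ n₀`, with `b'^{(2t)}_{n₀} = f (v (2t))` and `b^{(2t+1)}_{n₀} = v (2t+1)`
(indices mod `2k`, `v 0 := v (2k)`). -/
def RCSetup.AlphaType (H : RCSetup G G') (k : ℕ) (v : ℕ → V) : Prop :=
  ∃ n₀ : ℕ, 1 ≤ n₀ ∧ ∀ t : ℕ, t < k →
    (∀ i : ℕ, 1 ≤ i → i ≤ n₀ →
        (H.bSeq' (fun j => cyc k v (2 * t + j)) i).isSome ∧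
        (H.bSeq (fun j => cyc k v (2 * t + j)) i).isSome) ∧
    (∀ i : ℕ, n₀ < i →
        H.bSeq' (fun j => cyc k v (2 * t + j)) i = none ∧
        H.bSeq (fun j => cyc k v (2 * t + j)) i = none) ∧
    H.bSeq' (fun j => cyc k v (2 * t + j)) n₀ = some (H.f (cyc k v (2 * t))) ∧
    H.bSeq (fun j => cyc k v (2 * t + j)) n₀ = some (cyc k v (2 * t + 1))

namespace RCSetup

/-- Adjacency on the disjoint union. -/
def Adj2 (G : SimpleGraph V) (G' : SimpleGraph V') : V ⊕ V' → V ⊕ V' → Prop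
  | Sum.inl x, Sum.inl y => G.Adj x y
  | Sum.inr x, Sum.inr y => G'.Adj x y
  | _, _ => False

lemma step_adj (H : RCSetup G G') (w : ℕ → V) (j : ℕ) {x y a b : V ⊕ V'}
    (hx : H.step w j x = some a) (hy : H.step w j y = some b)
    (hxy : Adj2 G G' x y) : Adj2 G G' a b := by
  cases x with
  | inl x =>
    cases y with
    | inl y =>
      simp only [step] at hx hy
      split_ifs at hx hy with hj
      · have hx1 : x ≠ w j := by rintro rfl; simp [pphi] at hx
        have hy1 : y ≠ w j := by rintro rfl; simp [pphi] at hy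
        rw [pphi, dif_pos hx1] at hx
        rw [pphi, dif_pos hy1] at hy
        simp only [Option.map_some, Option.some.injEq] at hx hy
        subst hx; subst hy
        exact (H.adj_iff (w j) ⟨x, hx1⟩ ⟨y, hy1⟩).mp hxy
    | inr y => exact hxy.elim
  | inr x =>
    cases y with
    | inl y => exact hxy.elim
    | inr y =>
      simp only [step] at hx hy
      split_ifs at hx hy with hj
      · have hx1 : x ≠ H.f (w j) := by rintro rfl; simp [pphiInv] at hx
        have hy1 : y ≠ H.f (w j) := by rintro rfl; simp [pphiInv] at hy
        rw [pphiInv, dif_pos hx1] at hx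
        rw [pphiInv, dif_pos hy1] at hy
        simp only [Option.map_some, Option.some.injEq] at hx hy
        subst hx; subst hy
        show G.Adj _ _
        have := (H.adj_iff (w j) ((H.φ (w j)).symm ⟨x, hx1⟩) ((H.φ (w j)).symm ⟨y, hy1⟩)).mpr
        simp only [Equiv.apply_symm_apply] at this
        exact this hxy

lemma chainDown_none (H : RCSetup G G') (w : ℕ → V) (lo m : ℕ) :
    H.chainDown w lo m none = none := by
  induction m with
  | zero => rfl
  | succ m ih => simpa [chainDown] using ih

lemma chainDown_adj (H : RCSetup G G') (w : ℕ → V) (lo : ℕ) {a b : V ⊕ V'} :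
    ∀ (m : ℕ) (x y : V ⊕ V'),
    H.chainDown w lo m (some x) = some a → H.chainDown w lo m (some y) = some b →
    Adj2 G G' x y → Adj2 G G' a b := by
  intro m
  induction m with
  | zero =>
    intro x y hx hy hxy
    simp only [chainDown] at hx hy
    obtain rfl : x = a := by injection hx
    obtain rfl : y = b := by injection hy
    exact hxy
  | succ m ih =>
    intro x y hx hy hxy
    simp only [chainDown, Option.bind_some] at hx hy
    rcases hx' : H.step w (lo + m) x with _ | x'
    · rw [hx', chainDown_none] at hx; exact absurd hx (by simp)
    rcases hy' : H.step w (lo + m) y with _ | y'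
    · rw [hy', chainDown_none] at hy; exact absurd hy (by simp)
    rw [hx'] at hx; rw [hy'] at hy
    exact ih x' y' hx hy (H.step_adj w (lo + m) hx' hy' hxy)

lemma chainDown_succ (H : RCSetup G G') (w : ℕ → V) (lo : ℕ) :
    ∀ (m : ℕ) (z : Option (V ⊕ V')),
    H.chainDown w lo (m + 1) z = (H.chainDown w (lo + 1) m z).bind (H.step w lo) := by
  intro m
  induction m with
  | zero => intro z; simp [chainDown]
  | succ m ih =>
    intro z
    show H.chainDown w lo (m + 1) (z.bind (H.step w (lo + (m + 1)))) = _
    rw [ih]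
    show _ = (H.chainDown w (lo + 1) m (z.bind (H.step w (lo + 1 + m)))).bind _
    rw [show lo + (m + 1) = lo + 1 + m by omega]

lemma step_congr (H : RCSetup G G') {w' w : ℕ → V} (hw : ∀ j, w' j = w (j + 2))
    (j : ℕ) (x : V ⊕ V') : H.step w' j x = H.step w (j + 2) x := by
  cases x <;> simp [step, Nat.add_mod_right, hw j]

lemma chainDown_shift (H : RCSetup G G') {w' w : ℕ → V} (hw : ∀ j, w' j = w (j + 2))
    (lo : ℕ) : ∀ (m : ℕ) (z : Option (V ⊕ V')),
    H.chainDown w' lo m z = H.chainDown w (lo + 2) m z := by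
  intro m
  induction m with
  | zero => intro z; rfl
  | succ m ih =>
    intro z
    show H.chainDown w' lo m (z.bind (H.step w' (lo + m))) =
      H.chainDown w (lo + 2) m (z.bind (H.step w (lo + 2 + m)))
    rw [ih]
    congr 1
    have : H.step w' (lo + m) = H.step w (lo + m + 2) := funext (H.step_congr hw (lo + m))
    rw [this, show lo + m + 2 = lo + 2 + m by omega]

lemma inner_shift (H : RCSetup G G') {w' w : ℕ → V} (hw : ∀ j, w' j = w (j + 2))
    (i : ℕ) : H.inner w' i = H.inner w (i + 2) := by
  simp [inner, Nat.add_mod_right, hw i]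

lemma bSeq'_eq_some (H : RCSetup G G') (w : ℕ → V) (i : ℕ) (a : V') :
    H.bSeq' w i = some a ↔ H.chainDown w 1 (i - 1) (some (H.inner w i)) = some (Sum.inr a) := by
  unfold bSeq'
  rcases h : H.chainDown w 1 (i - 1) (some (H.inner w i)) with _ | (x | y) <;> simp

lemma bSeq_eq_some (H : RCSetup G G') (w : ℕ → V) (i : ℕ) (a : V) :
    H.bSeq w i = some a ↔ H.chainDown w 2 (i - 1) (some (H.inner w (i + 1))) = some (Sum.inl a) := by
  unfold bSeq
  rcases h : H.chainDown w 2 (i - 1) (some (H.inner w (i + 1))) with _ | (x | y) <;> simp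

lemma bSeq'_adj (H : RCSetup G G') (w : ℕ → V)
    (hN : ∀ j, j % 2 = 1 → H.Normal (w j) (w (j + 1)))
    (hD : ∀ j, j % 2 = 0 → H.Dashed (w j) (w (j + 1)))
    (m : ℕ) {a b : V'}
    (ha : H.bSeq' w (m + 1) = some a) (hb : H.bSeq' w (m + 2) = some b) :
    G'.Adj a b := by
  rw [H.bSeq'_eq_some] at ha hb
  simp only [Nat.add_sub_cancel] at ha
  have hb' : H.chainDown w 1 (m + 1) (some (H.inner w (m + 2))) = some (Sum.inr b) := hb
  simp only [chainDown, Option.bind_some] at hb'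
  rcases hz : H.step w (1 + m) (H.inner w (m + 2)) with _ | z
  · rw [hz, H.chainDown_none] at hb'; exact absurd hb' (by simp)
  rw [hz] at hb'
  rw [show (1 : ℕ) + m = m + 1 from Nat.add_comm 1 m] at hz
  have hadj2 : Adj2 G G' (H.inner w (m + 1)) z := by
    rcases Nat.even_or_odd (m + 1) with hp | hp
    · have hp1 : (m + 1) % 2 = 0 := Nat.even_iff.mp hp
      have hp2 : (m + 2) % 2 = 1 := by omega
      have hinner2 : H.inner w (m + 2) = Sum.inr (H.f (w (m + 2))) := by
        simp [inner, hp2]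
      obtain ⟨hne0, -, hGadj0⟩ := hD (m + 1) hp1
      have hne : H.f (w (m + 2)) ≠ H.f (w (m + 1)) := hne0
      have hGadj : G.Adj (w (m + 1)) (((H.φ (w (m + 1))).symm ⟨H.f (w (m + 2)), hne⟩).1) :=
        hGadj0
      have hstep : H.step w (m + 1) (H.inner w (m + 2)) =
          some (Sum.inl (((H.φ (w (m + 1))).symm ⟨H.f (w (m + 2)), hne⟩).1)) := by
        rw [hinner2]
        simp [step, hp1, pphiInv, hne]
      rw [hstep] at hz
      injection hz with hz; subst hz
      have hinner1 : H.inner w (m + 1) = Sum.inl (w (m + 1)) := by simp [inner, hp1]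
      rw [hinner1]
      exact hGadj
    · have hp1 : (m + 1) % 2 = 1 := Nat.odd_iff.mp hp
      have hp2 : (m + 2) % 2 = 0 := by omega
      have hinner2 : H.inner w (m + 2) = Sum.inl (w (m + 2)) := by simp [inner, hp2]
      obtain ⟨hne0, -, hGadj0⟩ := hN (m + 1) hp1
      have hne : w (m + 2) ≠ w (m + 1) := hne0
      have hGadj : G'.Adj (H.f (w (m + 1))) ((H.φ (w (m + 1)) ⟨w (m + 2), hne⟩).1) := hGadj0
      have hstep : H.step w (m + 1) (H.inner w (m + 2)) =
          some (Sum.inr ((H.φ (w (m + 1)) ⟨w (m + 2), hne⟩).1)) := by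
        rw [hinner2]
        simp [step, hp1, pphi, hne]
      rw [hstep] at hz
      injection hz with hz; subst hz
      have hinner1 : H.inner w (m + 1) = Sum.inr (H.f (w (m + 1))) := by simp [inner, hp1]
      rw [hinner1]
      exact hGadj
  exact H.chainDown_adj w 1 m _ _ ha hb' hadj2

end RCSetup

lemma cyc_congr {k : ℕ} (hk : 0 < k) (v : ℕ → V) {a b : ℕ}
    (h : a % (2 * k) = b % (2 * k)) : cyc k v a = cyc k v b := by
  unfold cyc
  congr 2
  rw [show a + 2 * k - 1 = a + (2 * k - 1) by omega,
      show b + 2 * k - 1 = b + (2 * k - 1) by omega,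
      Nat.add_mod a, h, ← Nat.add_mod]

lemma cyc_period {k : ℕ} (hk : 0 < k) (v : ℕ → V) (m : ℕ) :
    cyc k v (m + 2 * k) = cyc k v m :=
  cyc_congr hk v (Nat.add_mul_mod_self_right m 1 (2*k) ▸ by rw [one_mul])

lemma cycle_arrows {k : ℕ} (hk : 0 < k) (v : ℕ → V) (H : RCSetup G G')
    (harr : ∀ i : ℕ, 1 ≤ i → i ≤ k →
      H.Normal (cyc k v (2 * i - 1)) (cyc k v (2 * i)) ∧
      H.Dashed (cyc k v (2 * i)) (cyc k v (2 * i + 1))) :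
    (∀ j, j % 2 = 1 → H.Normal (cyc k v j) (cyc k v (j + 1))) ∧
    (∀ j, j % 2 = 0 → H.Dashed (cyc k v j) (cyc k v (j + 1))) := by
  have h2k : 0 < 2 * k := by omega
  have key : ∀ j : ℕ, ((j % (2 * k)) % 2 = j % 2) ∧ j % (2 * k) < 2 * k ∧
      (j + 1) % (2 * k) = (j % (2 * k) + 1) % (2 * k) := by
    intro j
    refine ⟨Nat.mod_mod_of_dvd j ⟨k, rfl⟩, Nat.mod_lt j h2k, ?_⟩
    rw [Nat.add_mod j 1, Nat.mod_eq_of_lt (show 1 < 2 * k by omega)]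
  constructor
  · intro j hj
    obtain ⟨hr2, hrlt, hj1⟩ := key j
    set r := j % (2 * k) with hrdef
    rw [hj] at hr2
    set i := (r + 1) / 2 with hidef
    have e1 : 2 * i - 1 = r := by omega
    have e2 : 2 * i = r + 1 := by omega
    have c1 : cyc k v (2 * i - 1) = cyc k v j := by
      refine cyc_congr hk v ?_
      rw [e1, Nat.mod_eq_of_lt hrlt]
    have c2 : cyc k v (2 * i) = cyc k v (j + 1) := by
      refine cyc_congr hk v ?_
      rw [e2, hj1]
    have := (harr i (by omega) (by omega)).1
    rwa [c1, c2] at this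
  · intro j hj
    obtain ⟨hr2, hrlt, hj1⟩ := key j
    set r := j % (2 * k) with hrdef
    rw [hj] at hr2
    rcases Nat.eq_zero_or_pos r with hr0 | hr0
    · have c1 : cyc k v (2 * k) = cyc k v j := by
        refine cyc_congr hk v ?_
        rw [Nat.mod_self, ← hrdef, hr0]
      have c2 : cyc k v (2 * k + 1) = cyc k v (j + 1) := by
        refine cyc_congr hk v ?_
        rw [hj1, hr0, Nat.add_mod (2 * k) 1, Nat.mod_self, Nat.zero_add, Nat.zero_add]
        exact Nat.mod_mod_of_dvd 1 dvd_rfl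
      have := (harr k (by omega) le_rfl).2
      rwa [c1, c2] at this
    · set i := r / 2 with hidef
      have e2 : 2 * i = r := by omega
      have c1 : cyc k v (2 * i) = cyc k v j := by
        refine cyc_congr hk v ?_
        rw [e2, Nat.mod_eq_of_lt hrlt]
      have c2 : cyc k v (2 * i + 1) = cyc k v (j + 1) := by
        refine cyc_congr hk v ?_
        rw [e2, hj1]
      have := (harr i (by omega) (by omega)).2
      rwa [c1, c2] at this

/-- If `v 1, …, v (2k)` is a cycle with alternate normal-arrows `v_{2i−1} ⟶ v_{2i}` and
dashed-arrows `v_{2i} ⇢ v_{2i+1}` (indices cyclic) and the cycle is α-type, then there are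
normal-arrows `v₁ ⟶ v₂` and `v₂ ⟶ v₁`. -/
theorem stmt_4 [Fintype V] [Fintype V']
    (h3 : 3 ≤ Fintype.card V) (h3' : 3 ≤ Fintype.card V')
    (H : RCSetup G G') (k : ℕ) (hk : 0 < k) (v : ℕ → V)
    (harr : ∀ i : ℕ, 1 ≤ i → i ≤ k →
      H.Normal (cyc k v (2 * i - 1)) (cyc k v (2 * i)) ∧
      H.Dashed (cyc k v (2 * i)) (cyc k v (2 * i + 1)))
    (hα : H.AlphaType k v) :
    H.Normal (cyc k v 1) (cyc k v 2) ∧ H.Normal (cyc k v 2) (cyc k v 1) := by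
  classical
  obtain ⟨hNall, hDall⟩ := cycle_arrows hk v H harr
  have h1 := (harr 1 le_rfl hk).1
  rw [show 2 * 1 - 1 = 1 by norm_num, show 2 * 1 = 2 by norm_num] at h1
  refine ⟨h1, ?_⟩
  obtain ⟨hne21, hnadj, -⟩ := h1
  obtain ⟨n₀, hn₀, hT⟩ := hα
  have hw : ∀ j, (fun j => cyc k v (j + 2)) j = (fun j => cyc k v j) (j + 2) := fun j => rfl
  have hW0 : (fun j => cyc k v (2 * 0 + j)) = fun j => cyc k v j := by
    funext j; norm_num
  have hW2 : (fun j => cyc k v (2 * (1 % k) + j)) = fun j => cyc k v (j + 2) := by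
    funext j
    rcases Nat.lt_or_ge 1 k with h | h
    · rw [Nat.mod_eq_of_lt h]
      congr 1
      omega
    · have hk1 : k = 1 := by omega
      subst hk1
      rw [Nat.mod_self]
      show cyc 1 v (2 * 0 + j) = cyc 1 v (j + 2)
      rw [show 2 * 0 + j = j by norm_num]
      show cyc 1 v j = cyc 1 v (j + 2 * 1)
      exact (cyc_period (by norm_num) v j).symm
  have hv2 : cyc k v (2 * (1 % k)) = cyc k v 2 := by
    rcases Nat.lt_or_ge 1 k with h | h
    · rw [Nat.mod_eq_of_lt h]
    · have hk1 : k = 1 := by omega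
      subst hk1
      rw [Nat.mod_self]
      refine cyc_congr (by norm_num) v ?_
      norm_num
  have h0 := hT 0 hk
  rw [hW0] at h0
  have h0b := h0.2.2.2
  rw [show 2 * 0 + 1 = 1 by norm_num] at h0b
  obtain ⟨m, rfl⟩ : ∃ m, n₀ = m + 2 := by
    refine ⟨n₀ - 2, ?_⟩
    rcases Nat.lt_or_ge n₀ 2 with h | h
    · exfalso
      have hn1 : n₀ = 1 := by omega
      rw [hn1, H.bSeq_eq_some] at h0b
      norm_num [RCSetup.chainDown, RCSetup.inner] at h0b
      exact hne21 h0b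
    · omega
  rw [H.bSeq_eq_some] at h0b
  rw [show m + 2 - 1 = m + 1 from rfl] at h0b
  rw [H.chainDown_succ] at h0b
  rw [show (2 : ℕ) + 1 = 3 from rfl] at h0b
  have hshift := H.chainDown_shift hw 1 m
  rw [show (1 : ℕ) + 2 = 3 from rfl] at hshift
  have hinn : H.inner (fun j => cyc k v (j + 2)) (m + 1) =
      H.inner (fun j => cyc k v j) (m + 2 + 1) := by
    rw [H.inner_shift hw (m + 1)]
  rw [← hinn, ← hshift] at h0b
  rcases hC : H.chainDown (fun j => cyc k v (j + 2)) 1 m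
      (some (H.inner (fun j => cyc k v (j + 2)) (m + 1))) with _ | z
  · rw [hC] at h0b; simp at h0b
  rw [hC] at h0b
  simp only [Option.bind_some] at h0b
  rcases z with zl | y
  · simp [RCSetup.step] at h0b
  have hy1 : y ≠ H.f (cyc k v 2) := by
    rintro rfl; simp [RCSetup.step, RCSetup.pphiInv] at h0b
  rw [show H.step (fun j => cyc k v j) 2 (Sum.inr y) =
      (H.pphiInv (cyc k v 2) y).map Sum.inl from by simp [RCSetup.step]] at h0b
  rw [RCSetup.pphiInv, dif_pos hy1] at h0b
  simp only [Option.map_some, Option.some.injEq, Sum.inl.injEq] at h0b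
  have hne12 : cyc k v 1 ≠ cyc k v 2 := by
    rw [← h0b]; exact ((H.φ (cyc k v 2)).symm ⟨y, hy1⟩).2
  have hyval : y = (H.φ (cyc k v 2) ⟨cyc k v 1, hne12⟩).1 := by
    have h5 : (⟨cyc k v 1, hne12⟩ : {w : V // w ≠ cyc k v 2}) =
        (H.φ (cyc k v 2)).symm ⟨y, hy1⟩ := Subtype.ext h0b.symm
    rw [h5, Equiv.apply_symm_apply]
  have hBm1 : H.bSeq' (fun j => cyc k v (j + 2)) (m + 1) = some y := by
    rw [H.bSeq'_eq_some, show m + 1 - 1 = m from rfl, hC]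
  have ht1 := hT (1 % k) (Nat.mod_lt 1 hk)
  rw [hW2] at ht1
  have hBn : H.bSeq' (fun j => cyc k v (j + 2)) (m + 2) = some (H.f (cyc k v 2)) := by
    have := ht1.2.2.1
    rwa [hv2] at this
  have hNw : ∀ j, j % 2 = 1 →
      H.Normal ((fun j => cyc k v (j + 2)) j) ((fun j => cyc k v (j + 2)) (j + 1)) := by
    intro j hj
    exact hNall (j + 2) (by omega)
  have hDw : ∀ j, j % 2 = 0 →
      H.Dashed ((fun j => cyc k v (j + 2)) j) ((fun j => cyc k v (j + 2)) (j + 1)) := by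
    intro j hj
    exact hDall (j + 2) (by omega)
  have hadj' := H.bSeq'_adj (fun j => cyc k v (j + 2)) hNw hDw m hBm1 hBn
  refine ⟨hne12, fun h => hnadj h.symm, ?_⟩
  rw [← hyval]
  exact hadj'.symm
end

section
/- Let n ≥ 3 and B, C ⊆ {1,…,n−1}, let A = A(n;B,C) with vertices a₁,…,a_n, let A' = A(n;C,B) with vertices b₁,…,b_n, and set a'_i := b_{n−i+1}. Then the map a_i ↦ a'_{n−i+2} (for i = 2,…,n) is a graph isomorphism from A−a₁ onto A'−a'₁, and the map a_i ↦ a'_{n−i} (for i = 1,…,n−1) is a graph isomorphism from A−a_n onto A'−a'_n, where A−v denotes the induced subgraph on the vertex set with v removed. -/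
/-- The defining relation of the graph `A(n;B,C)`: with vertices `a₁, …, a_n` encoded as
`Fin n` (so `a_i` is the element with value `i − 1`), for `i < j` the pair `a_i a_j` is
related iff (`i` is odd and `j − i ∈ B`) or (`i` is even and `j − i ∈ C`). -/
def ARel (n : ℕ) (B C : Finset ℕ) (x y : Fin n) : Prop :=
  x.val < y.val ∧
    ((Odd (x.val + 1) ∧ y.val - x.val ∈ B) ∨ (Even (x.val + 1) ∧ y.val - x.val ∈ C))

instance (n : ℕ) (B C : Finset ℕ) : DecidableRel (ARel n B C) := fun x y => by
  unfold ARel; infer_instance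

/-- The graph `A(n;B,C)` on the vertex set `{a₁, …, a_n}` (encoded as `Fin n`, with
`a_i ↦ i − 1`): for `1 ≤ i < j ≤ n`, `a_i a_j` is an edge iff (`i` is odd and `j − i ∈ B`)
or (`i` is even and `j − i ∈ C`). -/
def AGraph (n : ℕ) (B C : Finset ℕ) : SimpleGraph (Fin n) :=
  SimpleGraph.fromRel (ARel n B C)

instance (n : ℕ) (B C : Finset ℕ) : DecidableRel (AGraph n B C).Adj := fun x y =>
  decidable_of_iff _ (SimpleGraph.fromRel_adj (ARel n B C) x y).symm

lemma arel_key (B C : Finset ℕ) {a b a' b' : ℕ} (ha : a' + 1 = a) (hb : b' + 1 = b) :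
    (a < b ∧ ((Odd (a + 1) ∧ b - a ∈ B) ∨ (Even (a + 1) ∧ b - a ∈ C))) ↔
    (a' < b' ∧ ((Odd (a' + 1) ∧ b' - a' ∈ C) ∨ (Even (a' + 1) ∧ b' - a' ∈ B))) := by
  subst ha hb
  have hd : b' + 1 - (a' + 1) = b' - a' := by omega
  have h1 : Odd (a' + 1 + 1) ↔ Even (a' + 1) := by
    simp [Nat.odd_iff, Nat.even_iff]; omega
  have h2 : Even (a' + 1 + 1) ↔ Odd (a' + 1) := by
    simp [Nat.odd_iff, Nat.even_iff]; omega
  rw [hd, h1, h2]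
  constructor <;> rintro ⟨h, hc⟩ <;> exact ⟨by omega, hc.symm⟩

lemma adj_shift (n : ℕ) (B C : Finset ℕ) (x y x' y' : Fin n)
    (hx : x'.val + 1 = x.val) (hy : y'.val + 1 = y.val) :
    (AGraph n B C).Adj x y ↔ (AGraph n C B).Adj x' y' := by
  have hne : (x ≠ y) ↔ (x' ≠ y') := by
    rw [Ne, Ne, Fin.ext_iff, Fin.ext_iff]; omega
  simp only [AGraph, SimpleGraph.fromRel_adj, ARel]
  rw [hne, arel_key B C hx hy, arel_key B C hy hx]

/-- Let `A = A(n;B,C)` with vertices `a₁, …, a_n` and `A' = A(n;C,B)` with vertices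
`b₁, …, b_n`, and set `a'_i := b_{n−i+1}` (so as elements of `Fin n`, `a_i` has value
`i − 1` and `a'_i` has value `n − i`).  Then `a_i ↦ a'_{n−i+2}` (for `i = 2, …, n`, i.e.
value `t ↦ t − 1`) is a graph isomorphism from `A − a₁` onto `A' − a'₁`, and
`a_i ↦ a'_{n−i}` (for `i = 1, …, n−1`, i.e. value `t ↦ t + 1`) is a graph isomorphism
from `A − a_n` onto `A' − a'_n`. -/
theorem stmt_7 (n : ℕ) (hn : 3 ≤ n) (B C : Finset ℕ)
    (hB : ∀ b ∈ B, 1 ≤ b ∧ b ≤ n - 1) (hC : ∀ c ∈ C, 1 ≤ c ∧ c ≤ n - 1) :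
    (∃ ψ : (AGraph n B C).induce {x : Fin n | 1 ≤ x.val} ≃g
           (AGraph n C B).induce {x : Fin n | x.val < n - 1},
        ∀ (x : Fin n) (hx : 1 ≤ x.val), (ψ ⟨x, hx⟩).1.1 = x.val - 1) ∧
    (∃ ψ : (AGraph n B C).induce {x : Fin n | x.val < n - 1} ≃g
           (AGraph n C B).induce {x : Fin n | 1 ≤ x.val},
        ∀ (x : Fin n) (hx : x.val < n - 1), (ψ ⟨x, hx⟩).1.1 = x.val + 1) := by
  constructor
  · refine ⟨⟨⟨fun x => ⟨⟨x.1.val - 1, by have h1 := x.1.isLt; omega⟩, by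
        have h1 := x.1.isLt; have h2 : 1 ≤ x.1.val := x.2
        simp only [Set.mem_setOf_eq]; omega⟩,
      fun x => ⟨⟨x.1.val + 1, by
        have h1 : x.1.val < n - 1 := x.2; omega⟩, by
        simp only [Set.mem_setOf_eq]; omega⟩, ?_, ?_⟩, ?_⟩, fun x hx => rfl⟩
    · intro x
      have h2 : 1 ≤ x.1.val := x.2
      ext
      simp only []
      omega
    · intro x
      ext
      simp only []
      omega
    · intro a b
      simp only [Equiv.coe_fn_mk, SimpleGraph.comap_adj, Function.Embedding.coe_subtype]
      exact (adj_shift n B C a.1 b.1 _ _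
        (by show a.1.val - 1 + 1 = a.1.val; have : 1 ≤ a.1.val := a.2; omega)
        (by show b.1.val - 1 + 1 = b.1.val; have : 1 ≤ b.1.val := b.2; omega)).symm
  · refine ⟨⟨⟨fun x => ⟨⟨x.1.val + 1, by have h1 : x.1.val < n - 1 := x.2; omega⟩, by
        simp only [Set.mem_setOf_eq]; omega⟩,
      fun x => ⟨⟨x.1.val - 1, by have h1 := x.1.isLt; omega⟩, by
        have h1 := x.1.isLt; have h2 : 1 ≤ x.1.val := x.2
        simp only [Set.mem_setOf_eq]; omega⟩, ?_, ?_⟩, ?_⟩, fun x hx => rfl⟩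
    · intro x
      ext
      simp only []
      omega
    · intro x
      have h2 : 1 ≤ x.1.val := x.2
      ext
      simp only []
      omega
    · intro a b
      simp only [Equiv.coe_fn_mk, SimpleGraph.comap_adj, Function.Embedding.coe_subtype]
      exact adj_shift n C B _ _ a.1 b.1 rfl rfl
end

section
/- Let n ≥ 3 and b ∈ {1,…,n−1}. Then n−b is odd if and only if for each j = 1, 2 the map a_i ↦ a_{n−i+1} (i = 1,…,n) is a graph automorphism of A_j(b). -/
lemma adj1 (n b : ℕ) (x y : Fin n) :
    (AGraph n {b} ∅).Adj x y ↔
      x.val ≠ y.val ∧ ((x.val < y.val ∧ x.val % 2 = 0 ∧ y.val - x.val = b) ∨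
        (y.val < x.val ∧ y.val % 2 = 0 ∧ x.val - y.val = b)) := by
  simp [AGraph, SimpleGraph.fromRel_adj, ARel, Nat.odd_iff, Nat.even_iff,
    Finset.mem_singleton, Fin.ext_iff]
  omega

lemma adj2 (n b : ℕ) (x y : Fin n) :
    (AGraph n ∅ {b}).Adj x y ↔
      x.val ≠ y.val ∧ ((x.val < y.val ∧ x.val % 2 = 1 ∧ y.val - x.val = b) ∨
        (y.val < x.val ∧ y.val % 2 = 1 ∧ x.val - y.val = b)) := by
  simp [AGraph, SimpleGraph.fromRel_adj, ARel, Nat.odd_iff, Nat.even_iff,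
    Finset.mem_singleton, Fin.ext_iff]
  omega

/-- For `1 ≤ b ≤ n − 1`, with `A₁(b) = A(n;{b},∅)` and `A₂(b) = A(n;∅,{b})` on vertices
`a₁, …, a_n` (so `a_i` has value `i − 1` in `Fin n`): `n − b` is odd iff for each `j = 1, 2`
the map `a_i ↦ a_{n−i+1}` (i.e. value `t ↦ n − 1 − t`) is a graph automorphism of `A_j(b)`. -/
theorem stmt_11 (n : ℕ) (hn : 3 ≤ n) (b : ℕ) (hb1 : 1 ≤ b) (hb2 : b ≤ n - 1) :
    Odd (n - b) ↔
      ((∃ ψ : AGraph n {b} ∅ ≃g AGraph n {b} ∅,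
          ∀ x : Fin n, (ψ x).val = n - 1 - x.val) ∧
       (∃ ψ : AGraph n ∅ {b} ≃g AGraph n ∅ {b},
          ∀ x : Fin n, (ψ x).val = n - 1 - x.val)) := by
  rw [Nat.odd_iff]
  constructor
  · intro hodd
    constructor
    · refine ⟨⟨Fin.revPerm, ?_⟩, fun x => by show (Fin.rev x).val = n - 1 - x.val; rw [Fin.val_rev]; omega⟩
      intro x y
      rw [adj1, adj1]
      have hx := x.isLt; have hy := y.isLt
      simp only [Fin.revPerm_apply, Fin.val_rev]
      omega
    · refine ⟨⟨Fin.revPerm, ?_⟩, fun x => by show (Fin.rev x).val = n - 1 - x.val; rw [Fin.val_rev]; omega⟩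
      intro x y
      rw [adj2, adj2]
      have hx := x.isLt; have hy := y.isLt
      simp only [Fin.revPerm_apply, Fin.val_rev]
      omega
  · rintro ⟨⟨ψ, hψ⟩, -⟩
    have hbn : b < n := by omega
    have h0 : (AGraph n {b} ∅).Adj ⟨0, by omega⟩ ⟨b, hbn⟩ := by
      rw [adj1]; simp; omega
    have h1 := ψ.map_adj_iff.mpr h0
    rw [adj1] at h1
    rw [hψ, hψ] at h1
    simp at h1
    omega
end

section
/- Let n ≥ 3 and b ∈ {1,…,n−1} with n−b even. Then for each j = 1, 2, the map a_i ↦ a_{n−i+2} (i = 2,…,n) is a graph automorphism of A_j(b)−a₁, and the map a_i ↦ a_{n−i} (i = 1,…,n−1) is a graph automorphism of A_j(b)−a_n, where G−v denotes the induced subgraph of G with vertex v removed. -/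
lemma mkIso {n : ℕ} (B C : Finset ℕ) (s : Set (Fin n)) (g : Fin n → Fin n)
    (hmem : ∀ x ∈ s, g x ∈ s) (hinv : ∀ x ∈ s, g (g x) = x)
    (hadj : ∀ x ∈ s, ∀ y ∈ s, (AGraph n B C).Adj x y → (AGraph n B C).Adj (g x) (g y)) :
    ∃ ψ : (AGraph n B C).induce s ≃g (AGraph n B C).induce s,
      ∀ (x : Fin n) (hx : x ∈ s), (ψ ⟨x, hx⟩).1 = g x := by
  refine ⟨⟨⟨fun x => ⟨g x.1, hmem _ x.2⟩, fun x => ⟨g x.1, hmem _ x.2⟩,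
      fun x => Subtype.ext (hinv _ x.2), fun x => Subtype.ext (hinv _ x.2)⟩, ?_⟩,
      fun x hx => rfl⟩
  intro x y
  simp only [Equiv.coe_fn_mk, SimpleGraph.comap_adj]
  constructor
  · intro h
    have := hadj _ (hmem _ x.2) _ (hmem _ y.2) h
    rwa [hinv _ x.2, hinv _ y.2] at this
  · exact hadj _ x.2 _ y.2

/-- For `1 ≤ b ≤ n − 1` with `n − b` even, with `A₁(b) = A(n;{b},∅)` and `A₂(b) = A(n;∅,{b})`
on vertices `a₁, …, a_n` (so `a_i` has value `i − 1` in `Fin n`): for each `j = 1, 2`, the map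
`a_i ↦ a_{n−i+2}` (`i = 2, …, n`, i.e. value `t ↦ n − t`) is a graph automorphism of
`A_j(b) − a₁`, and the map `a_i ↦ a_{n−i}` (`i = 1, …, n−1`, i.e. value `t ↦ n − 2 − t`) is a
graph automorphism of `A_j(b) − a_n`. -/
theorem stmt_12 (n : ℕ) (hn : 3 ≤ n) (b : ℕ) (hb1 : 1 ≤ b) (hb2 : b ≤ n - 1)
    (hpar : Even (n - b)) :
    (∃ ψ : (AGraph n {b} ∅).induce {x : Fin n | 1 ≤ x.val} ≃g
           (AGraph n {b} ∅).induce {x : Fin n | 1 ≤ x.val},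
        ∀ (x : Fin n) (hx : 1 ≤ x.val), (ψ ⟨x, hx⟩).1.1 = n - x.val) ∧
    (∃ ψ : (AGraph n ∅ {b}).induce {x : Fin n | 1 ≤ x.val} ≃g
           (AGraph n ∅ {b}).induce {x : Fin n | 1 ≤ x.val},
        ∀ (x : Fin n) (hx : 1 ≤ x.val), (ψ ⟨x, hx⟩).1.1 = n - x.val) ∧
    (∃ ψ : (AGraph n {b} ∅).induce {x : Fin n | x.val < n - 1} ≃g
           (AGraph n {b} ∅).induce {x : Fin n | x.val < n - 1},
        ∀ (x : Fin n) (hx : x.val < n - 1), (ψ ⟨x, hx⟩).1.1 = n - 2 - x.val) ∧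
    (∃ ψ : (AGraph n ∅ {b}).induce {x : Fin n | x.val < n - 1} ≃g
           (AGraph n ∅ {b}).induce {x : Fin n | x.val < n - 1},
        ∀ (x : Fin n) (hx : x.val < n - 1), (ψ ⟨x, hx⟩).1.1 = n - 2 - x.val) := by
  have hn0 : 0 < n := by omega
  rw [Nat.even_iff] at hpar
  set g1 : Fin n → Fin n :=
    fun x => if h : 1 ≤ x.val then (⟨n - x.val, by omega⟩ : Fin n) else x with hg1
  set g2 : Fin n → Fin n :=
    fun x => if h : x.val < n - 1 then (⟨n - 2 - x.val, by omega⟩ : Fin n) else x with hg2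
  have e1 : ∀ x : Fin n, 1 ≤ x.val → (g1 x).val = n - x.val := by
    intro x hx; simp only [hg1]; rw [dif_pos hx]
  have e2 : ∀ x : Fin n, x.val < n - 1 → (g2 x).val = n - 2 - x.val := by
    intro x hx; simp only [hg2]; rw [dif_pos hx]
  refine ⟨?_, ?_, ?_, ?_⟩
  · obtain ⟨ψ, hψ⟩ := mkIso {b} ∅ {x : Fin n | 1 ≤ x.val} g1
      (by intro x hx; simp only [Set.mem_setOf_eq] at hx ⊢
          rw [e1 x hx]; have := x.isLt; omega)
      (by intro x hx; simp only [Set.mem_setOf_eq] at hx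
          have hx' := x.isLt
          have h2 : 1 ≤ (g1 x).val := by rw [e1 x hx]; omega
          refine Fin.ext ?_; rw [e1 _ h2, e1 x hx]; omega)
      (by intro x hx y hy h
          simp only [Set.mem_setOf_eq] at hx hy
          have hx' := x.isLt; have hy' := y.isLt
          rw [AGraph, SimpleGraph.fromRel_adj] at h ⊢
          obtain ⟨hne, hrel⟩ := h
          refine ⟨fun he => hne (Fin.ext ?_), ?_⟩
          · have := congrArg Fin.val he; rw [e1 x hx, e1 y hy] at this; omega
          · simp only [ARel, Finset.mem_singleton, Finset.notMem_empty, and_false, false_and,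
              or_false, false_or, Nat.odd_iff, Nat.even_iff, e1 x hx, e1 y hy] at hrel ⊢
            omega)
    refine ⟨ψ, fun x hx => ?_⟩
    rw [hψ x hx, e1 x hx]
  · obtain ⟨ψ, hψ⟩ := mkIso ∅ {b} {x : Fin n | 1 ≤ x.val} g1
      (by intro x hx; simp only [Set.mem_setOf_eq] at hx ⊢
          rw [e1 x hx]; have := x.isLt; omega)
      (by intro x hx; simp only [Set.mem_setOf_eq] at hx
          have hx' := x.isLt
          have h2 : 1 ≤ (g1 x).val := by rw [e1 x hx]; omega
          refine Fin.ext ?_; rw [e1 _ h2, e1 x hx]; omega)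
      (by intro x hx y hy h
          simp only [Set.mem_setOf_eq] at hx hy
          have hx' := x.isLt; have hy' := y.isLt
          rw [AGraph, SimpleGraph.fromRel_adj] at h ⊢
          obtain ⟨hne, hrel⟩ := h
          refine ⟨fun he => hne (Fin.ext ?_), ?_⟩
          · have := congrArg Fin.val he; rw [e1 x hx, e1 y hy] at this; omega
          · simp only [ARel, Finset.mem_singleton, Finset.notMem_empty, and_false, false_and,
              or_false, false_or, Nat.odd_iff, Nat.even_iff, e1 x hx, e1 y hy] at hrel ⊢
            omega)
    refine ⟨ψ, fun x hx => ?_⟩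
    rw [hψ x hx, e1 x hx]
  · obtain ⟨ψ, hψ⟩ := mkIso {b} ∅ {x : Fin n | x.val < n - 1} g2
      (by intro x hx; simp only [Set.mem_setOf_eq] at hx ⊢
          rw [e2 x hx]; have := x.isLt; omega)
      (by intro x hx; simp only [Set.mem_setOf_eq] at hx
          have hx' := x.isLt
          have h2 : (g2 x).val < n - 1 := by rw [e2 x hx]; omega
          refine Fin.ext ?_; rw [e2 _ h2, e2 x hx]; omega)
      (by intro x hx y hy h
          simp only [Set.mem_setOf_eq] at hx hy
          have hx' := x.isLt; have hy' := y.isLt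
          rw [AGraph, SimpleGraph.fromRel_adj] at h ⊢
          obtain ⟨hne, hrel⟩ := h
          refine ⟨fun he => hne (Fin.ext ?_), ?_⟩
          · have := congrArg Fin.val he; rw [e2 x hx, e2 y hy] at this; omega
          · simp only [ARel, Finset.mem_singleton, Finset.notMem_empty, and_false, false_and,
              or_false, false_or, Nat.odd_iff, Nat.even_iff, e2 x hx, e2 y hy] at hrel ⊢
            omega)
    refine ⟨ψ, fun x hx => ?_⟩
    rw [hψ x hx, e2 x hx]
  · obtain ⟨ψ, hψ⟩ := mkIso ∅ {b} {x : Fin n | x.val < n - 1} g2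
      (by intro x hx; simp only [Set.mem_setOf_eq] at hx ⊢
          rw [e2 x hx]; have := x.isLt; omega)
      (by intro x hx; simp only [Set.mem_setOf_eq] at hx
          have hx' := x.isLt
          have h2 : (g2 x).val < n - 1 := by rw [e2 x hx]; omega
          refine Fin.ext ?_; rw [e2 _ h2, e2 x hx]; omega)
      (by intro x hx y hy h
          simp only [Set.mem_setOf_eq] at hx hy
          have hx' := x.isLt; have hy' := y.isLt
          rw [AGraph, SimpleGraph.fromRel_adj] at h ⊢
          obtain ⟨hne, hrel⟩ := h
          refine ⟨fun he => hne (Fin.ext ?_), ?_⟩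
          · have := congrArg Fin.val he; rw [e2 x hx, e2 y hy] at this; omega
          · simp only [ARel, Finset.mem_singleton, Finset.notMem_empty, and_false, false_and,
              or_false, false_or, Nat.odd_iff, Nat.even_iff, e2 x hx, e2 y hy] at hrel ⊢
            omega)
    refine ⟨ψ, fun x hx => ?_⟩
    rw [hψ x hx, e2 x hx]
end

section
/- Let n ≥ 3 and B, C ⊆ {1,…,n−1}, let A = A(n;B,C) with vertices a₁,…,a_n, let A' = A(n;C,B) with vertices b₁,…,b_n, and set a'_i := b_{n−i+1}. Then the following are equivalent: (i) β(A) = γ(A); (ii) |E(A)| = |E(A')|, deg_A a₁ = deg_{A'} a'₁, and deg_A a_n = deg_{A'} a'_n. -/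
lemma arel_iff {n : ℕ} {B C : Finset ℕ} {x y : Fin n} :
    ARel n B C x y ↔ x.val < y.val ∧
      ((Even x.val ∧ y.val - x.val ∈ B) ∨ (¬ Even x.val ∧ y.val - x.val ∈ C)) := by
  unfold ARel
  constructor
  · rintro ⟨h, ⟨hp, hm⟩ | ⟨hp, hm⟩⟩
    · exact ⟨h, Or.inl ⟨by rwa [Nat.odd_add_one, Nat.not_odd_iff_even] at hp, hm⟩⟩
    · exact ⟨h, Or.inr ⟨by rwa [Nat.even_add_one] at hp, hm⟩⟩
  · rintro ⟨h, ⟨hp, hm⟩ | ⟨hp, hm⟩⟩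
    · exact ⟨h, Or.inl ⟨by rwa [Nat.odd_add_one, Nat.not_odd_iff_even], hm⟩⟩
    · exact ⟨h, Or.inr ⟨by rwa [Nat.even_add_one], hm⟩⟩

lemma agraph_adj {n : ℕ} {B C : Finset ℕ} {x y : Fin n} :
    (AGraph n B C).Adj x y ↔ ARel n B C x y ∨ ARel n B C y x := by
  rw [AGraph, SimpleGraph.fromRel_adj]
  constructor
  · exact fun h => h.2
  · intro h
    refine ⟨fun e => ?_, h⟩
    subst e
    rcases h with h | h <;> exact absurd (arel_iff.1 h).1 (lt_irrefl _)

lemma cnt_even (m : ℕ) :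
    ((Finset.range m).filter (fun k => Even k)).card = (m + 1) / 2 := by
  induction m with
  | zero => simp
  | succ m ih =>
    rw [Finset.range_add_one, Finset.filter_insert]
    by_cases h : Even m
    · rw [if_pos h, Finset.card_insert_of_notMem (by simp), ih]
      rw [Nat.even_iff] at h; omega
    · rw [if_neg h, ih]
      rw [Nat.even_iff] at h
      simp at h
      omega

lemma cnt_odd (m : ℕ) :
    ((Finset.range m).filter (fun k => ¬ Even k)).card = m / 2 := by
  have h1 := Finset.card_filter_add_card_filter_not
    (s := Finset.range m) (p := fun k => Even k)
  have h2 := cnt_even m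
  rw [Finset.card_range] at h1
  omega

lemma deg_zero (n : ℕ) (B C : Finset ℕ)
    (hB : ∀ b ∈ B, 1 ≤ b ∧ b ≤ n - 1) (h0 : 0 < n) :
    (AGraph n B C).degree ⟨0, h0⟩ = B.card := by
  have hdeg : (AGraph n B C).degree ⟨0, h0⟩
      = (Finset.univ.filter ((AGraph n B C).Adj ⟨0, h0⟩)).card := by
    rw [← SimpleGraph.neighborFinset_eq_filter]; rfl
  rw [hdeg]
  have hmem : ∀ u : Fin n, (AGraph n B C).Adj ⟨0, h0⟩ u ↔ u.val ∈ B := by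
    intro u
    rw [agraph_adj, arel_iff, arel_iff]
    have hv : (⟨0, h0⟩ : Fin n).val = 0 := rfl
    rw [hv]
    constructor
    · rintro (⟨h, ⟨_, hm⟩ | ⟨hp, _⟩⟩ | ⟨h, _⟩)
      · simpa using hm
      · exact absurd Even.zero hp
      · omega
    · intro hu
      have := hB _ hu
      exact Or.inl ⟨by omega, Or.inl ⟨Even.zero, by simpa using hu⟩⟩
  refine Finset.card_bij' (fun u _ => u.val)
    (fun b hb => (⟨b, by have := hB b hb; omega⟩ : Fin n)) ?_ ?_ ?_ ?_
  · intro u hu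
    simp only [Finset.mem_filter, Finset.mem_univ, true_and, hmem] at hu
    exact hu
  · intro b hb
    simp only [Finset.mem_filter, Finset.mem_univ, true_and, hmem]
    simpa using hb
  · intro u hu
    apply Fin.ext
    simp
  · intro b hb
    simp

lemma deg_last (n : ℕ) (B C : Finset ℕ)
    (hB : ∀ b ∈ B, 1 ≤ b ∧ b ≤ n - 1) (hC : ∀ c ∈ C, 1 ≤ c ∧ c ≤ n - 1) (hn : 2 ≤ n)
    (h0 : n - 1 < n) :
    (AGraph n B C).degree ⟨n - 1, h0⟩
      = (B.filter fun b => Odd (n - b)).card + (C.filter fun c => ¬ Odd (n - c)).card := by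
  have hdeg : (AGraph n B C).degree ⟨n - 1, h0⟩
      = (Finset.univ.filter ((AGraph n B C).Adj ⟨n - 1, h0⟩)).card := by
    rw [← SimpleGraph.neighborFinset_eq_filter]; rfl
  rw [hdeg]
  have hdisj : Disjoint (B.filter fun b => Odd (n - b)) (C.filter fun c => ¬ Odd (n - c)) := by
    rw [Finset.disjoint_left]
    intro d hd1 hd2
    simp only [Finset.mem_filter] at hd1 hd2
    exact hd2.2 hd1.2
  rw [← Finset.card_union_of_disjoint hdisj]
  have hmem : ∀ u : Fin n, (AGraph n B C).Adj ⟨n - 1, h0⟩ u ↔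
      (u.val < n - 1 ∧
        ((Even u.val ∧ n - 1 - u.val ∈ B) ∨ (¬ Even u.val ∧ n - 1 - u.val ∈ C))) := by
    intro u
    rw [agraph_adj, arel_iff, arel_iff]
    have hv : (⟨n - 1, h0⟩ : Fin n).val = n - 1 := rfl
    rw [hv]
    have hu := u.isLt
    constructor
    · rintro (⟨h, _⟩ | ⟨h, hm⟩)
      · omega
      · exact ⟨h, hm⟩
    · rintro ⟨h, hm⟩
      exact Or.inr ⟨h, hm⟩
  refine Finset.card_bij' (fun u _ => n - 1 - u.val)
    (fun d _ => (⟨n - 1 - d, by omega⟩ : Fin n)) ?_ ?_ ?_ ?_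
  · intro u hu
    simp only [Finset.mem_filter, Finset.mem_univ, true_and, hmem] at hu
    obtain ⟨hlt, hor⟩ := hu
    have hnd : n - (n - 1 - u.val) = u.val + 1 := by omega
    rcases hor with ⟨hp, hm⟩ | ⟨hp, hm⟩
    · apply Finset.mem_union_left
      rw [Finset.mem_filter]
      exact ⟨hm, by rw [hnd, Nat.odd_add_one, Nat.not_odd_iff_even]; exact hp⟩
    · apply Finset.mem_union_right
      rw [Finset.mem_filter]
      exact ⟨hm, by rw [hnd, Nat.odd_add_one, Nat.not_odd_iff_even]; exact hp⟩
  · intro d hd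
    simp only [Finset.mem_filter, Finset.mem_univ, true_and, hmem]
    rw [Finset.mem_union, Finset.mem_filter, Finset.mem_filter] at hd
    have hrange : 1 ≤ d ∧ d ≤ n - 1 := by
      rcases hd with ⟨hdB, _⟩ | ⟨hdC, _⟩
      · exact hB d hdB
      · exact hC d hdC
    have hval : n - 1 - (n - 1 - d) = d := by omega
    have hnd : n - d = (n - 1 - d) + 1 := by omega
    rcases hd with ⟨hdB, hodd⟩ | ⟨hdC, hodd⟩
    · rw [hnd, Nat.odd_add_one, Nat.not_odd_iff_even] at hodd
      exact ⟨by omega, Or.inl ⟨hodd, by rw [hval]; exact hdB⟩⟩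
    · rw [hnd, Nat.odd_add_one, Nat.not_odd_iff_even] at hodd
      exact ⟨by omega, Or.inr ⟨hodd, by rw [hval]; exact hdC⟩⟩
  · intro u hu
    simp only [Finset.mem_filter, Finset.mem_univ, true_and, hmem] at hu
    apply Fin.ext
    simp
    omega
  · intro d hd
    rw [Finset.mem_union, Finset.mem_filter, Finset.mem_filter] at hd
    have hrange : 1 ≤ d ∧ d ≤ n - 1 := by
      rcases hd with ⟨hdB, _⟩ | ⟨hdC, _⟩
      · exact hB d hdB
      · exact hC d hdC
    simp
    omega

lemma edge_card (n : ℕ) (B C : Finset ℕ)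
    (hB : ∀ b ∈ B, 1 ≤ b ∧ b ≤ n - 1) (hC : ∀ c ∈ C, 1 ≤ c ∧ c ≤ n - 1) :
    (AGraph n B C).edgeFinset.card
      = ((∑ b ∈ B, (n - b) / 2) + (∑ c ∈ C, (n - c) / 2))
        + (B.filter fun b => Odd (n - b)).card := by
  -- step a: edges ↔ ordered pairs satisfying ARel
  have ha : (Finset.univ.filter fun p : Fin n × Fin n => ARel n B C p.1 p.2).card
      = (AGraph n B C).edgeFinset.card := by
    refine Finset.card_bij (fun p _ => Sym2.mk p.1 p.2) ?_ ?_ ?_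
    · intro p hp
      simp only [Finset.mem_filter, Finset.mem_univ, true_and] at hp
      rw [SimpleGraph.mem_edgeFinset, SimpleGraph.mem_edgeSet]
      exact agraph_adj.2 (Or.inl hp)
    · intro p hp q hq h
      simp only [Finset.mem_filter, Finset.mem_univ, true_and] at hp hq
      obtain ⟨x, y⟩ := p
      obtain ⟨z, w⟩ := q
      dsimp only at h
      rw [Sym2.eq_iff] at h
      rcases h with ⟨h1, h2⟩ | ⟨h1, h2⟩
      · rw [h1, h2]
      · exfalso
        have h3 := (arel_iff.1 hp).1
        have h4 := (arel_iff.1 hq).1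
        subst h1; subst h2
        simp only at h3 h4
        omega
    · intro e he
      induction e with
      | _ x y =>
        rw [SimpleGraph.mem_edgeFinset, SimpleGraph.mem_edgeSet, agraph_adj] at he
        rcases he with h | h
        · exact ⟨(x, y), by simpa using h, rfl⟩
        · exact ⟨(y, x), by simpa using h, Sym2.eq_swap⟩
  rw [← ha]
  -- step b: split according to parity of the first coordinate
  have hb : (Finset.univ.filter fun p : Fin n × Fin n => ARel n B C p.1 p.2)
      = (Finset.univ.filter fun p : Fin n × Fin n =>
          p.1.val < p.2.val ∧ Even p.1.val ∧ p.2.val - p.1.val ∈ B)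
        ∪ (Finset.univ.filter fun p : Fin n × Fin n =>
          p.1.val < p.2.val ∧ ¬ Even p.1.val ∧ p.2.val - p.1.val ∈ C) := by
    rw [← Finset.filter_or]
    apply Finset.filter_congr
    intro p _
    rw [arel_iff]
    constructor
    · rintro ⟨h, ⟨hp, hm⟩ | ⟨hp, hm⟩⟩
      · exact Or.inl ⟨h, hp, hm⟩
      · exact Or.inr ⟨h, hp, hm⟩
    · rintro (⟨h, hp, hm⟩ | ⟨h, hp, hm⟩)
      · exact ⟨h, Or.inl ⟨hp, hm⟩⟩
      · exact ⟨h, Or.inr ⟨hp, hm⟩⟩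
  have hdisj : Disjoint
      (Finset.univ.filter fun p : Fin n × Fin n =>
          p.1.val < p.2.val ∧ Even p.1.val ∧ p.2.val - p.1.val ∈ B)
      (Finset.univ.filter fun p : Fin n × Fin n =>
          p.1.val < p.2.val ∧ ¬ Even p.1.val ∧ p.2.val - p.1.val ∈ C) := by
    rw [Finset.disjoint_left]
    intro p h1 h2
    simp only [Finset.mem_filter] at h1 h2
    exact h2.2.2.1 h1.2.2.1
  rw [hb, Finset.card_union_of_disjoint hdisj]
  -- step c: count each part fiberwise over the difference
  have hcB : (Finset.univ.filter fun p : Fin n × Fin n =>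
        p.1.val < p.2.val ∧ Even p.1.val ∧ p.2.val - p.1.val ∈ B).card
      = ∑ b ∈ B, ((Finset.range (n - b)).filter (fun k => Even k)).card := by
    rw [Finset.card_eq_sum_card_fiberwise (f := fun p => p.2.val - p.1.val) (t := B)
      (fun p hp => by simp only [Finset.coe_filter, Set.mem_setOf_eq] at hp; exact hp.2.2.2)]
    refine Finset.sum_congr rfl (fun b hbB => ?_)
    have hb1 := hB b hbB
    refine Finset.card_bij' (fun p _ => p.1.val)
      (fun k hk =>
        ((⟨k, by simp only [Finset.mem_filter, Finset.mem_range] at hk; omega⟩ : Fin n),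
         (⟨k + b, by simp only [Finset.mem_filter, Finset.mem_range] at hk; omega⟩ : Fin n)))
      ?_ ?_ ?_ ?_
    · intro p hp
      simp only [Finset.mem_filter, Finset.mem_univ, true_and] at hp
      obtain ⟨⟨hlt, hev, _⟩, hd⟩ := hp
      simp only [Finset.mem_filter, Finset.mem_range]
      have h2 := p.2.isLt
      exact ⟨by omega, hev⟩
    · intro k hk
      simp only [Finset.mem_filter, Finset.mem_range] at hk
      simp only [Finset.mem_filter, Finset.mem_univ, true_and]
      refine ⟨⟨?_, ?_, ?_⟩, ?_⟩
      · show k < k + b; omega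
      · show Even k; exact hk.2
      · show k + b - k ∈ B
        have h : k + b - k = b := by omega
        rw [h]; exact hbB
      · show k + b - k = b; omega
    · intro p hp
      simp only [Finset.mem_filter, Finset.mem_univ, true_and] at hp
      obtain ⟨⟨hlt, _, _⟩, hd⟩ := hp
      refine Prod.ext (Fin.ext ?_) (Fin.ext ?_)
      · simp
      · show p.1.val + b = p.2.val
        omega
    · intro k hk
      simp
  have hcC : (Finset.univ.filter fun p : Fin n × Fin n =>
        p.1.val < p.2.val ∧ ¬ Even p.1.val ∧ p.2.val - p.1.val ∈ C).card
      = ∑ c ∈ C, ((Finset.range (n - c)).filter (fun k => ¬ Even k)).card := by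
    rw [Finset.card_eq_sum_card_fiberwise (f := fun p => p.2.val - p.1.val) (t := C)
      (fun p hp => by simp only [Finset.coe_filter, Set.mem_setOf_eq] at hp; exact hp.2.2.2)]
    refine Finset.sum_congr rfl (fun c hcC => ?_)
    have hc1 := hC c hcC
    refine Finset.card_bij' (fun p _ => p.1.val)
      (fun k hk =>
        ((⟨k, by simp only [Finset.mem_filter, Finset.mem_range] at hk; omega⟩ : Fin n),
         (⟨k + c, by simp only [Finset.mem_filter, Finset.mem_range] at hk; omega⟩ : Fin n)))
      ?_ ?_ ?_ ?_
    · intro p hp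
      simp only [Finset.mem_filter, Finset.mem_univ, true_and] at hp
      obtain ⟨⟨hlt, hev, _⟩, hd⟩ := hp
      simp only [Finset.mem_filter, Finset.mem_range]
      have h2 := p.2.isLt
      exact ⟨by omega, hev⟩
    · intro k hk
      simp only [Finset.mem_filter, Finset.mem_range] at hk
      simp only [Finset.mem_filter, Finset.mem_univ, true_and]
      refine ⟨⟨?_, ?_, ?_⟩, ?_⟩
      · show k < k + c; omega
      · show ¬ Even k; exact hk.2
      · show k + c - k ∈ C
        have h : k + c - k = c := by omega
        rw [h]; exact hcC
      · show k + c - k = c; omega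
    · intro p hp
      simp only [Finset.mem_filter, Finset.mem_univ, true_and] at hp
      obtain ⟨⟨hlt, _, _⟩, hd⟩ := hp
      refine Prod.ext (Fin.ext ?_) (Fin.ext ?_)
      · simp
      · show p.1.val + c = p.2.val
        omega
    · intro k hk
      simp
  rw [hcB, hcC]
  -- step d: evaluate the parity counts
  have hsplit : ∀ b : ℕ, ((Finset.range (n - b)).filter (fun k => Even k)).card
      = (n - b) / 2 + (if Odd (n - b) then 1 else 0) := by
    intro b
    rw [cnt_even]
    rcases Nat.even_or_odd (n - b) with h | h
    · rw [if_neg (by rwa [Nat.not_odd_iff_even])]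
      rw [Nat.even_iff] at h; omega
    · rw [if_pos h]
      rw [Nat.odd_iff] at h; omega
  have hsum : ∑ b ∈ B, ((Finset.range (n - b)).filter (fun k => Even k)).card
      = (∑ b ∈ B, (n - b) / 2) + (B.filter fun b => Odd (n - b)).card := by
    rw [Finset.sum_congr rfl (fun b _ => hsplit b), Finset.sum_add_distrib]
    congr 1
    have := Finset.sum_boole (p := fun b => Odd (n - b)) (s := B) (R := ℕ)
    simpa using this
  rw [hsum]
  have hsumC : ∑ c ∈ C, ((Finset.range (n - c)).filter (fun k => ¬ Even k)).card
      = ∑ c ∈ C, (n - c) / 2 := by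
    refine Finset.sum_congr rfl (fun c _ => ?_)
    rw [cnt_odd]
  rw [hsumC]
  ring

/-- For `A = A(n;B,C)` (vertices `a₁, …, a_n`, `a_i` of value `i − 1`) and `A' = A(n;C,B)`
(vertices `b₁, …, b_n`, `a'_i := b_{n−i+1}`, so `a'_i` has value `n − i`), the following are
equivalent: (i) `β(A) = γ(A)`; (ii) `|E(A)| = |E(A')|`, `deg_A a₁ = deg_{A'} a'₁` and
`deg_A a_n = deg_{A'} a'_n`. -/
theorem stmt_13 (n : ℕ) (hn : 3 ≤ n) (B C : Finset ℕ)
    (hB : ∀ b ∈ B, 1 ≤ b ∧ b ≤ n - 1) (hC : ∀ c ∈ C, 1 ≤ c ∧ c ≤ n - 1) :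
    (B.filter fun b => Odd (n - b)).card = (C.filter fun c => Odd (n - c)).card ↔
      ((AGraph n B C).edgeFinset.card = (AGraph n C B).edgeFinset.card ∧
       (AGraph n B C).degree ⟨0, by omega⟩ = (AGraph n C B).degree ⟨n - 1, by omega⟩ ∧
       (AGraph n B C).degree ⟨n - 1, by omega⟩ = (AGraph n C B).degree ⟨0, by omega⟩) := by
  rw [edge_card n B C hB hC, edge_card n C B hC hB,
    deg_zero n B C hB, deg_zero n C B hC,
    deg_last n B C hB hC (by omega), deg_last n C B hC hB (by omega)]
  have hBsplit : (B.filter fun b => Odd (n - b)).card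
      + (B.filter fun b => ¬ Odd (n - b)).card = B.card :=
    Finset.card_filter_add_card_filter_not _
  have hCsplit : (C.filter fun c => Odd (n - c)).card
      + (C.filter fun c => ¬ Odd (n - c)).card = C.card :=
    Finset.card_filter_add_card_filter_not _
  omega
end

section
/- Let n ≥ 3 and B, C ⊆ {1,…,n−1}, let A = A(n;B,C) with vertices a₁,…,a_n, let A' = A(n;C,B) with vertices b₁,…,b_n, set a'_i := b_{n−i+1}, and let B₀ := {b ∈ B : n−b is odd} and C₀ := {c ∈ C : n−c is odd}. Then B₀ = C₀ if and only if all of the following hold: (1) the map a_i ↦ a_{n−i+2} (i = 2,…,n) is a graph automorphism of A−a₁; (2) the map a_i ↦ a_{n−i} (i = 1,…,n−1) is a graph automorphism of A−a_n; (3) the map a_i ↦ a'_i (i = 1,…,n) is a graph isomorphism from A onto A' (in particular A ≅ A'). -/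
lemma adj_lt {n : ℕ} {B C : Finset ℕ} {x y : Fin n} (h : x.val < y.val) :
    (AGraph n B C).Adj x y ↔
      ((Even x.val ∧ y.val - x.val ∈ B) ∨ (Odd x.val ∧ y.val - x.val ∈ C)) := by
  have hne : x ≠ y := by
    intro e; subst e; exact lt_irrefl _ h
  have hyx : ¬ y.val < x.val := by omega
  rw [AGraph, SimpleGraph.fromRel_adj]
  unfold ARel
  simp [hne, h, hyx, Nat.odd_add_one, Nat.even_add_one, Nat.not_even_iff_odd,
    Nat.not_odd_iff_even]

lemma parity_core (P Q : Prop) (t u : ℕ)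
    (h : t % 2 = u % 2 ∨ (t % 2 ≠ u % 2 ∧ (P ↔ Q))) :
    ((t % 2 = 0 ∧ P) ∨ (t % 2 = 1 ∧ Q)) ↔ ((u % 2 = 0 ∧ P) ∨ (u % 2 = 1 ∧ Q)) := by
  rcases h with h | ⟨h, hPQ⟩
  · rw [h]
  · have h0 : t % 2 = 0 ↔ u % 2 = 1 := by omega
    have h1 : t % 2 = 1 ↔ u % 2 = 0 := by omega
    rw [h0, h1]
    tauto

lemma parity_core' (P Q : Prop) (t u : ℕ)
    (h : (t % 2 = u % 2 ∧ (P ↔ Q)) ∨ t % 2 ≠ u % 2) :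
    ((t % 2 = 0 ∧ P) ∨ (t % 2 = 1 ∧ Q)) ↔ ((u % 2 = 0 ∧ Q) ∨ (u % 2 = 1 ∧ P)) := by
  rcases h with ⟨h, hPQ⟩ | h
  · rw [← h]; tauto
  · have h0 : u % 2 = 0 ↔ t % 2 = 1 := by omega
    have h1 : u % 2 = 1 ↔ t % 2 = 0 := by omega
    rw [h0, h1]
    tauto

/-- `t ↦ n - 1 - t` on `Fin n`. -/
def flip3 (n : ℕ) : Fin n → Fin n :=
  fun x => ⟨n - 1 - x.val, by have := x.isLt; omega⟩

/-- `t ↦ n - t` on values `1 ≤ t`. -/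
def flip1 (n : ℕ) : {x : Fin n | 1 ≤ x.val} → {x : Fin n | 1 ≤ x.val} :=
  fun x => ⟨⟨n - x.1.val, by have := x.1.isLt; have : 1 ≤ x.1.val := x.2; omega⟩,
    by have := x.1.isLt; have : 1 ≤ x.1.val := x.2
       show 1 ≤ n - x.1.val; omega⟩

/-- `t ↦ n - 2 - t` on values `t < n - 1`. -/
def flip2 (n : ℕ) : {x : Fin n | x.val < n - 1} → {x : Fin n | x.val < n - 1} :=
  fun x => ⟨⟨n - 2 - x.1.val, by have := x.1.isLt; have : x.1.val < n - 1 := x.2; omega⟩,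
    by have := x.1.isLt; have : x.1.val < n - 1 := x.2
       show n - 2 - x.1.val < n - 1; omega⟩

/-- For `A = A(n;B,C)` (vertices `a₁, …, a_n`, `a_i` of value `i − 1`) and `A' = A(n;C,B)`
(vertices `b₁, …, b_n`, `a'_i := b_{n−i+1}`, so `a'_i` has value `n − i`), and
`B₀ := {b ∈ B : n−b odd}`, `C₀ := {c ∈ C : n−c odd}`: `B₀ = C₀` iff (1) the map
`a_i ↦ a_{n−i+2}` (value `t ↦ n − t`) is an automorphism of `A − a₁`, (2) the map
`a_i ↦ a_{n−i}` (value `t ↦ n − 2 − t`) is an automorphism of `A − a_n`, and (3) the map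
`a_i ↦ a'_i` (value `t ↦ n − 1 − t`) is an isomorphism from `A` onto `A'`. -/
theorem stmt_14 (n : ℕ) (hn : 3 ≤ n) (B C : Finset ℕ)
    (hB : ∀ b ∈ B, 1 ≤ b ∧ b ≤ n - 1) (hC : ∀ c ∈ C, 1 ≤ c ∧ c ≤ n - 1) :
    B.filter (fun b => Odd (n - b)) = C.filter (fun c => Odd (n - c)) ↔
      ((∃ ψ : (AGraph n B C).induce {x : Fin n | 1 ≤ x.val} ≃g
              (AGraph n B C).induce {x : Fin n | 1 ≤ x.val},
          ∀ (x : Fin n) (hx : 1 ≤ x.val), (ψ ⟨x, hx⟩).1.1 = n - x.val) ∧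
       (∃ ψ : (AGraph n B C).induce {x : Fin n | x.val < n - 1} ≃g
              (AGraph n B C).induce {x : Fin n | x.val < n - 1},
          ∀ (x : Fin n) (hx : x.val < n - 1), (ψ ⟨x, hx⟩).1.1 = n - 2 - x.val) ∧
       (∃ ψ : AGraph n B C ≃g AGraph n C B,
          ∀ x : Fin n, (ψ x).val = n - 1 - x.val)) := by
  constructor
  · intro hf
    have H : ∀ d, (n - d) % 2 = 1 → (d ∈ B ↔ d ∈ C) := by
      intro d hd
      have := Finset.ext_iff.mp hf d
      simp only [Finset.mem_filter] at this
      have hodd : Odd (n - d) := Nat.odd_iff.mpr hd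
      tauto
    refine ⟨?_, ?_, ?_⟩
    · -- automorphism of A − a₁
      have hinv : Function.Involutive (flip1 n) := by
        intro x
        have h1 := x.1.isLt
        have h2 : 1 ≤ x.1.val := x.2
        apply Subtype.ext; apply Fin.ext
        show n - (n - x.1.val) = x.1.val
        omega
      have key : ∀ a b : {x : Fin n | 1 ≤ x.val}, a.1.val < b.1.val →
          (((AGraph n B C).induce {x : Fin n | 1 ≤ x.val}).Adj (flip1 n a) (flip1 n b) ↔
            ((AGraph n B C).induce {x : Fin n | 1 ≤ x.val}).Adj a b) := by
        intro a b hab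
        have ha1 : 1 ≤ a.1.val := a.2
        have hb1 : b.1.val < n := b.1.isLt
        have hlt : ((flip1 n b).1 : Fin n).val < ((flip1 n a).1 : Fin n).val := by
          show n - b.1.val < n - a.1.val; omega
        show (AGraph n B C).Adj (flip1 n a).1 (flip1 n b).1 ↔ (AGraph n B C).Adj a.1 b.1
        rw [(AGraph n B C).adj_comm, adj_lt hlt, adj_lt hab]
        have hd : ((flip1 n a).1 : Fin n).val - ((flip1 n b).1 : Fin n).val
            = b.1.val - a.1.val := by
          show (n - a.1.val) - (n - b.1.val) = b.1.val - a.1.val; omega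
        rw [hd]
        have hu : ((flip1 n b).1 : Fin n).val = n - b.1.val := rfl
        rw [hu]
        simp only [Nat.even_iff, Nat.odd_iff]
        refine (parity_core _ _ _ _ ?_).symm
        by_cases hpar : (n - (b.1.val - a.1.val)) % 2 = 1
        · exact Or.inr ⟨by omega, H _ hpar⟩
        · exact Or.inl (by omega)
      have all : ∀ a b : {x : Fin n | 1 ≤ x.val},
          (((AGraph n B C).induce {x : Fin n | 1 ≤ x.val}).Adj (flip1 n a) (flip1 n b) ↔
            ((AGraph n B C).induce {x : Fin n | 1 ≤ x.val}).Adj a b) := by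
        intro a b
        rcases lt_trichotomy a.1.val b.1.val with h | h | h
        · exact key a b h
        · have : a = b := Subtype.ext (Fin.ext h)
          subst this
          simp [SimpleGraph.irrefl]
        · rw [SimpleGraph.adj_comm, SimpleGraph.adj_comm (G := _) a b]
          exact key b a h
      exact ⟨⟨hinv.toPerm _, all _ _⟩, fun x hx => rfl⟩
    · -- automorphism of A − a_n
      have hinv : Function.Involutive (flip2 n) := by
        intro x
        have h1 := x.1.isLt
        have h2 : x.1.val < n - 1 := x.2
        apply Subtype.ext; apply Fin.ext
        show n - 2 - (n - 2 - x.1.val) = x.1.val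
        omega
      have key : ∀ a b : {x : Fin n | x.val < n - 1}, a.1.val < b.1.val →
          (((AGraph n B C).induce {x : Fin n | x.val < n - 1}).Adj (flip2 n a) (flip2 n b) ↔
            ((AGraph n B C).induce {x : Fin n | x.val < n - 1}).Adj a b) := by
        intro a b hab
        have hb1 : b.1.val < n - 1 := b.2
        have hlt : ((flip2 n b).1 : Fin n).val < ((flip2 n a).1 : Fin n).val := by
          show n - 2 - b.1.val < n - 2 - a.1.val; omega
        show (AGraph n B C).Adj (flip2 n a).1 (flip2 n b).1 ↔ (AGraph n B C).Adj a.1 b.1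
        rw [(AGraph n B C).adj_comm, adj_lt hlt, adj_lt hab]
        have hd : ((flip2 n a).1 : Fin n).val - ((flip2 n b).1 : Fin n).val
            = b.1.val - a.1.val := by
          show (n - 2 - a.1.val) - (n - 2 - b.1.val) = b.1.val - a.1.val; omega
        rw [hd]
        have hu : ((flip2 n b).1 : Fin n).val = n - 2 - b.1.val := rfl
        rw [hu]
        simp only [Nat.even_iff, Nat.odd_iff]
        refine (parity_core _ _ _ _ ?_).symm
        by_cases hpar : (n - (b.1.val - a.1.val)) % 2 = 1
        · exact Or.inr ⟨by omega, H _ hpar⟩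
        · exact Or.inl (by omega)
      have all : ∀ a b : {x : Fin n | x.val < n - 1},
          (((AGraph n B C).induce {x : Fin n | x.val < n - 1}).Adj (flip2 n a) (flip2 n b) ↔
            ((AGraph n B C).induce {x : Fin n | x.val < n - 1}).Adj a b) := by
        intro a b
        rcases lt_trichotomy a.1.val b.1.val with h | h | h
        · exact key a b h
        · have : a = b := Subtype.ext (Fin.ext h)
          subst this
          simp [SimpleGraph.irrefl]
        · rw [SimpleGraph.adj_comm, SimpleGraph.adj_comm (G := _) a b]
          exact key b a h
      exact ⟨⟨hinv.toPerm _, all _ _⟩, fun x hx => rfl⟩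
    · -- isomorphism A ≅ A'
      have hinv : Function.Involutive (flip3 n) := by
        intro x
        have h1 := x.isLt
        apply Fin.ext
        show n - 1 - (n - 1 - x.val) = x.val
        omega
      have key : ∀ a b : Fin n, a.val < b.val →
          ((AGraph n C B).Adj (flip3 n a) (flip3 n b) ↔ (AGraph n B C).Adj a b) := by
        intro a b hab
        have hb1 : b.val < n := b.isLt
        have hlt : (flip3 n b).val < (flip3 n a).val := by
          show n - 1 - b.val < n - 1 - a.val; omega
        rw [(AGraph n C B).adj_comm, adj_lt hlt, adj_lt hab]
        have hd : (flip3 n a).val - (flip3 n b).val = b.val - a.val := by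
          show (n - 1 - a.val) - (n - 1 - b.val) = b.val - a.val; omega
        rw [hd]
        have hu : (flip3 n b).val = n - 1 - b.val := rfl
        rw [hu]
        simp only [Nat.even_iff, Nat.odd_iff]
        refine (parity_core' _ _ _ _ ?_).symm
        by_cases hpar : (n - (b.val - a.val)) % 2 = 1
        · exact Or.inl ⟨by omega, H _ hpar⟩
        · exact Or.inr (by omega)
      have all : ∀ a b : Fin n,
          ((AGraph n C B).Adj (flip3 n a) (flip3 n b) ↔ (AGraph n B C).Adj a b) := by
        intro a b
        rcases lt_trichotomy a.val b.val with h | h | h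
        · exact key a b h
        · have : a = b := Fin.ext h
          subst this
          simp [SimpleGraph.irrefl]
        · rw [SimpleGraph.adj_comm, SimpleGraph.adj_comm (G := _) a b]
          exact key b a h
      exact ⟨⟨hinv.toPerm _, all _ _⟩, fun x => rfl⟩
  · rintro ⟨-, -, ψ, hψ⟩
    have H : ∀ d, Odd (n - d) → (d ∈ B ↔ d ∈ C) := by
      intro d hd
      have hd1 : 1 ≤ n - d := hd.pos
      by_cases hd0 : d = 0
      · subst hd0
        constructor <;> intro h
        · exact absurd (hB 0 h).1 (by omega)
        · exact absurd (hC 0 h).1 (by omega)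
      · have hdn : d ≤ n - 1 := by omega
        set x : Fin n := ⟨0, by omega⟩ with hxdef
        set y : Fin n := ⟨d, by omega⟩ with hydef
        have hmap := ψ.map_rel_iff (a := x) (b := y)
        have hx0 : x.val = 0 := rfl
        have hy0 : y.val = d := rfl
        have hxv : (ψ x).val = n - 1 := by rw [hψ x, hx0]; omega
        have hyv : (ψ y).val = n - 1 - d := by rw [hψ y, hy0]
        have hlt : (ψ y).val < (ψ x).val := by omega
        rw [(AGraph n C B).adj_comm, adj_lt hlt, adj_lt (show x.val < y.val by
          simp only [hxdef, hydef]; omega)] at hmap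
        have hdd : (ψ x).val - (ψ y).val = d := by omega
        rw [hdd, hyv] at hmap
        have hxv0 : x.val = 0 := rfl
        have hyv0 : y.val = d := rfl
        rw [hxv0, hyv0] at hmap
        simp only [Nat.even_iff, Nat.odd_iff] at hmap
        rw [Nat.odd_iff] at hd
        have he : (n - 1 - d) % 2 = 0 := by omega
        have hd0' : d - 0 = d := by omega
        rw [hd0', he] at hmap
        simp only [Nat.zero_mod] at hmap
        tauto
    ext d
    simp only [Finset.mem_filter]
    constructor
    · rintro ⟨hdB, hodd⟩; exact ⟨(H d hodd).mp hdB, hodd⟩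
    · rintro ⟨hdC, hodd⟩; exact ⟨(H d hodd).mpr hdC, hodd⟩
end

section
/- The graphs A(8;{1,3,4},{1,5}) and A(8;{1,5},{1,3,4}) are not isomorphic, although there exists a bijection g between their vertex sets with deg v = deg g(v) for every vertex v, and β(A(8;{1,3,4},{1,5})) = γ(A(8;{1,3,4},{1,5})). -/
/-- The graphs `A(8;{1,3,4},{1,5})` and `A(8;{1,5},{1,3,4})` are not isomorphic, although
there is a degree-preserving bijection between their vertex sets and
`β(A(8;{1,3,4},{1,5})) = γ(A(8;{1,3,4},{1,5}))`. -/
theorem stmt_15 :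
    IsEmpty (AGraph 8 {1, 3, 4} {1, 5} ≃g AGraph 8 {1, 5} {1, 3, 4}) ∧
    (∃ g : Fin 8 ≃ Fin 8, ∀ v : Fin 8,
      (AGraph 8 {1, 3, 4} {1, 5}).degree v = (AGraph 8 {1, 5} {1, 3, 4}).degree (g v)) ∧
    (({1, 3, 4} : Finset ℕ).filter fun b => Odd (8 - b)).card =
      (({1, 5} : Finset ℕ).filter fun c => Odd (8 - c)).card := by
  refine ⟨?_, ⟨Equiv.mk ![2,6,1,7,3,4,5,0] ![7,2,0,4,5,6,1,3] (by decide) (by decide),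
    by decide⟩, by decide⟩
  constructor
  intro f
  have hmap : (AGraph 8 {1, 3, 4} {1, 5}).map f.toEquiv.toEmbedding
      = AGraph 8 {1, 5} {1, 3, 4} := by
    ext x y
    simp only [SimpleGraph.map_adj, Equiv.toEmbedding_apply]
    constructor
    · rintro ⟨u, v, h, rfl, rfl⟩
      exact f.map_adj_iff.mpr h
    · intro h
      exact ⟨f.symm x, f.symm y, f.symm.map_adj_iff.mpr h, f.apply_symm_apply x,
        f.apply_symm_apply y⟩
  have hcard : ((AGraph 8 {1, 3, 4} {1, 5}).cliqueSet 3).ncard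
      = ((AGraph 8 {1, 5} {1, 3, 4}).cliqueSet 3).ncard := by
    rw [← hmap, Equiv.coe_toEmbedding, SimpleGraph.cliqueSet_map_of_equiv,
      Set.ncard_image_of_injective _ (Finset.map_injective _)]
  have h3 : ((AGraph 8 {1, 3, 4} {1, 5}).cliqueSet 3).ncard = 3 := by
    rw [← SimpleGraph.coe_cliqueFinset, Set.ncard_coe_finset]; decide
  have h4 : ((AGraph 8 {1, 5} {1, 3, 4}).cliqueSet 3).ncard = 4 := by
    rw [← SimpleGraph.coe_cliqueFinset, Set.ncard_coe_finset]; decide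
  omega
end
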